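/- arXiv:1902.00304 — 4 statements merged into one kernel-verified Lean document; each statement's English description precedes it below -/
import Mathlib

section
/- Let T be a minimum spanning tree of a finite connected edge-weighted graph G = (V,E,w) with strictly positive weights, and let G_δ = (V, E ∪ E_δ, w') be the graph obtained from G by adding a set E_δ of δ new edges with strictly positive weights, where E ∩ E_δ = ∅ and w' extends w to E ∪ E_δ. Then there exists a minimum spanning tree T* of G_δ with T* ⊆ T ∪ E_δ, i.e., a minimum spanning tree of G_δ that can be obtained by removing δ edges from T ∪ E_δ. -/
/-! ## Spanning trees and minimum spanning trees of edge-weighted graphs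

Graphs on a finite vertex type `V` are given by finite sets of (non-loop)
unordered edges `Finset (Sym2 V)`; an edge set `F` spans the graph
`SimpleGraph.fromEdgeSet ↑F` on `V`. -/

open SimpleGraph

variable {V : Type*} [Fintype V] [DecidableEq V]

/-- `F` is a spanning tree (of whatever graph contains its edges): the graph
`(V, F)` is connected and acyclic. -/
def IsSpanningTree (F : Finset (Sym2 V)) : Prop :=
  (SimpleGraph.fromEdgeSet (F : Set (Sym2 V))).Connected ∧
    (SimpleGraph.fromEdgeSet (F : Set (Sym2 V))).IsAcyclic

/-- The total weight `w(F) = Σ_{e ∈ F} w(e)` of an edge set. -/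
def edgeWeight (w : Sym2 V → ℝ) (F : Finset (Sym2 V)) : ℝ := ∑ e ∈ F, w e

/-- `T` is a minimum spanning tree of the graph with edge set `E` and edge
weights `w`. -/
def IsMST (E : Finset (Sym2 V)) (w : Sym2 V → ℝ) (T : Finset (Sym2 V)) : Prop :=
  T ⊆ E ∧ IsSpanningTree T ∧
    ∀ T' : Finset (Sym2 V), T' ⊆ E → IsSpanningTree T' → edgeWeight w T ≤ edgeWeight w T'

set_option linter.unusedSectionVars false in
/-- Transfer of reachability: if `H` contains every edge of `G` except possibly
`s(x,y)`, and `x, y` are `H`-reachable, then `G`-reachability implies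
`H`-reachability. -/
lemma transfer_reach {G H : SimpleGraph V} {x y : V}
    (hadj : ∀ a b, G.Adj a b → s(a, b) ≠ s(x, y) → H.Adj a b)
    (hxy : H.Reachable x y) : ∀ {a b : V}, G.Reachable a b → H.Reachable a b := by
  intro a b hab
  obtain ⟨p⟩ := hab
  induction p with
  | nil => exact Reachable.refl _
  | cons h1 q ih =>
    refine Reachable.trans ?_ ih
    rename_i a' c' _
    by_cases he : s(a', c') = s(x, y)
    · rw [Sym2.eq_iff] at he
      rcases he with ⟨rfl, rfl⟩ | ⟨rfl, rfl⟩
      · exact hxy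
      · exact hxy.symm
    · exact (hadj a' c' h1 he).reachable

set_option linter.unusedSectionVars false in
lemma reach_delete_or {G : SimpleGraph V} {u v : V} :
    ∀ {a : V}, G.Walk a u →
      (G \ fromEdgeSet {s(u, v)}).Reachable a u ∨ (G \ fromEdgeSet {s(u, v)}).Reachable a v
  | _, .nil => Or.inl (Reachable.refl _)
  | a, .cons (v := c) h1 q => by
    by_cases he : s(a, c) = s(u, v)
    · rw [Sym2.eq_iff] at he
      rcases he with ⟨rfl, rfl⟩ | ⟨rfl, rfl⟩
      · exact Or.inl (Reachable.refl _)
      · exact Or.inr (Reachable.refl _)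
    · have hadj : (G \ fromEdgeSet {s(u, v)}).Adj a c := by
        refine ⟨h1, ?_⟩
        simp only [fromEdgeSet_adj, Set.mem_singleton_iff, not_and]
        intro hh; exact absurd hh he
      rcases reach_delete_or q with h2 | h2
      · exact Or.inl (hadj.reachable.trans h2)
      · exact Or.inr (hadj.reachable.trans h2)

set_option linter.unusedSectionVars false in
lemma cross_edge {G H : SimpleGraph V} {v : V} :
    ∀ {u : V} (p : G.Walk u v), ¬ H.Reachable u v →
      ∃ x y, G.Adj x y ∧ s(x, y) ∈ p.edges ∧ ¬ H.Reachable x y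
  | u, .nil, h => absurd (Reachable.refl _) h
  | u, .cons (v := c) h1 q, h => by
    by_cases hr : H.Reachable u c
    · obtain ⟨x, y, h2, h3, h4⟩ := cross_edge q (fun hc => h (hr.trans hc))
      exact ⟨x, y, h2, by simp [h3], h4⟩
    · exact ⟨u, c, h1, by simp, hr⟩

set_option linter.unusedSectionVars false in
lemma split_walk {G : SimpleGraph V} {x y v : V} :
    ∀ {u : V} (p : G.Walk u v), p.edges.Nodup → s(x, y) ∈ p.edges →
      ((G \ fromEdgeSet {s(x, y)}).Reachable u x ∧ (G \ fromEdgeSet {s(x, y)}).Reachable y v) ∨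
      ((G \ fromEdgeSet {s(x, y)}).Reachable u y ∧ (G \ fromEdgeSet {s(x, y)}).Reachable x v)
  | u, .nil, _, hm => by simp at hm
  | u, .cons (v := c) h1 q, hnd, hm => by
    rw [Walk.edges_cons, List.nodup_cons] at hnd
    rw [Walk.edges_cons] at hm
    rcases List.mem_cons.mp hm with he | hq
    · have hq' : ∀ e ∈ q.edges, e ∉ ({s(x, y)} : Set (Sym2 V)) := by
        intro e heq
        simp only [Set.mem_singleton_iff]
        rintro rfl
        rw [← he] at hnd
        exact hnd.1 heq
      have hreach : (G \ fromEdgeSet {s(x, y)}).Reachable c v :=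
        ⟨q.toDeleteEdges _ hq'⟩
      rw [eq_comm, Sym2.eq_iff] at he
      rcases he with ⟨rfl, rfl⟩ | ⟨rfl, rfl⟩
      · exact Or.inl ⟨Reachable.refl _, hreach⟩
      · exact Or.inr ⟨Reachable.refl _, hreach⟩
    · have hne : s(u, c) ≠ s(x, y) := by
        intro hh; rw [← hh] at hq; exact hnd.1 hq
      have hadj : (G \ fromEdgeSet {s(x, y)}).Adj u c := by
        refine ⟨h1, ?_⟩
        simp only [fromEdgeSet_adj, Set.mem_singleton_iff, not_and]
        intro hh; exact absurd hh hne
      rcases split_walk q hnd.2 hq with ⟨h2, h3⟩ | ⟨h2, h3⟩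
      · exact Or.inl ⟨hadj.reachable.trans h2, h3⟩
      · exact Or.inr ⟨hadj.reachable.trans h2, h3⟩

/-- Every connected edge set contains a spanning tree. -/
lemma exists_spanning_subtree :
    ∀ F : Finset (Sym2 V), (fromEdgeSet (F : Set (Sym2 V))).Connected →
      ∃ T ⊆ F, IsSpanningTree T := by
  intro F
  induction F using Finset.strongInduction with
  | _ F ih =>
    intro hc
    by_cases ha : (fromEdgeSet (F : Set (Sym2 V))).IsAcyclic
    · exact ⟨F, subset_rfl, hc, ha⟩
    · rw [isAcyclic_iff_forall_adj_isBridge] at ha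
      push_neg at ha
      obtain ⟨u, v, hadj, hnb⟩ := ha
      rw [isBridge_iff] at hnb
      have hre : (fromEdgeSet (F : Set (Sym2 V)) \ fromEdgeSet {s(u, v)}).Reachable u v := by
        by_contra h; exact hnb h
      obtain ⟨hmemuv, hneuv⟩ := (fromEdgeSet_adj _).mp hadj
      rw [Finset.mem_coe] at hmemuv
      have hle : fromEdgeSet (F : Set (Sym2 V)) \ fromEdgeSet {s(u, v)} ≤
          fromEdgeSet ((F.erase s(u, v) : Finset (Sym2 V)) : Set (Sym2 V)) := by
        intro a b hab
        obtain ⟨h1, h2⟩ := hab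
        obtain ⟨h3, h4⟩ := (fromEdgeSet_adj _).mp h1
        refine (fromEdgeSet_adj _).mpr ⟨?_, h4⟩
        rw [Finset.coe_erase]
        refine ⟨h3, ?_⟩
        simp only [Set.mem_singleton_iff]
        intro hh
        exact h2 ((fromEdgeSet_adj _).mpr ⟨by simp [hh], h4⟩)
      have hcond : ∀ a b, (fromEdgeSet (F : Set (Sym2 V))).Adj a b → s(a, b) ≠ s(u, v) →
          (fromEdgeSet ((F.erase s(u, v) : Finset (Sym2 V)) : Set (Sym2 V))).Adj a b := by
        intro a b hab hne
        obtain ⟨h3, h4⟩ := (fromEdgeSet_adj _).mp hab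
        exact (fromEdgeSet_adj _).mpr ⟨by
          rw [Finset.mem_coe] at h3 ⊢
          exact Finset.mem_erase.mpr ⟨hne, h3⟩, h4⟩
      have hconn' : (fromEdgeSet ((F.erase s(u, v) : Finset (Sym2 V)) : Set (Sym2 V))).Connected := by
        have : Nonempty V := hc.nonempty
        exact ⟨fun a b => transfer_reach hcond (hre.mono hle) (hc.preconnected a b)⟩
      obtain ⟨T, hT1, hT2⟩ := ih (F.erase s(u, v)) (Finset.erase_ssubset hmemuv) hconn'
      exact ⟨T, hT1.trans (Finset.erase_subset _ _), hT2⟩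

/-- A spanning tree without diagonal edges has `|V| - 1` edges. -/
lemma spanning_card {F : Finset (Sym2 V)} (hd : ∀ e ∈ F, ¬ e.IsDiag)
    (h : IsSpanningTree F) : F.card + 1 = Fintype.card V := by
  classical
  have hef : (fromEdgeSet (F : Set (Sym2 V))).edgeFinset = F := by
    ext e
    rw [mem_edgeFinset, edgeSet_fromEdgeSet]
    simp only [Set.mem_diff, Finset.mem_coe, Set.mem_setOf_eq]
    exact ⟨fun he => he.1, fun he => ⟨he, hd e he⟩⟩
  have ht : (fromEdgeSet (F : Set (Sym2 V))).IsTree := ⟨h.1, h.2⟩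
  have := ht.card_edgeFinset
  rwa [hef] at this

/-- Let `T` be a minimum spanning tree of a finite connected
edge-weighted graph `G = (V,E,w)` with strictly positive weights, and let
`G_δ = (V, E ∪ E_δ, w)` be obtained from `G` by adding a set `E_δ` of `δ` new
edges of strictly positive weight, `E ∩ E_δ = ∅`. Then there is a minimum
spanning tree `T*` of `G_δ` with `T* ⊆ T ∪ E_δ`, i.e., one that is obtained by
removing `δ` edges from `T ∪ E_δ`. -/
theorem mst_add_edges_exists_close_mst (E Eδ T : Finset (Sym2 V)) (w : Sym2 V → ℝ) (δ : ℕ)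
    (hloop : ∀ e ∈ E ∪ Eδ, ¬ e.IsDiag)
    (hw : ∀ e ∈ E ∪ Eδ, 0 < w e)
    (hconn : (SimpleGraph.fromEdgeSet (E : Set (Sym2 V))).Connected)
    (hT : IsMST E w T)
    (hdisj : Disjoint E Eδ) (hδ : Eδ.card = δ) :
    ∃ Tstar : Finset (Sym2 V), Tstar ⊆ T ∪ Eδ ∧ ((T ∪ Eδ) \ Tstar).card = δ ∧
      IsMST (E ∪ Eδ) w Tstar := by
  classical
  obtain ⟨hTE, hTst, hTmin⟩ := hT
  set A := T ∪ Eδ with hA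
  -- the finite collection of connected subsets of `E ∪ Eδ`
  set S : Finset (Finset (Sym2 V)) :=
    (E ∪ Eδ).powerset.filter (fun F => (fromEdgeSet (F : Set (Sym2 V))).Connected) with hS
  have memS : ∀ F : Finset (Sym2 V),
      F ∈ S ↔ F ⊆ E ∪ Eδ ∧ (fromEdgeSet (F : Set (Sym2 V))).Connected := by
    intro F
    rw [hS, Finset.mem_filter, Finset.mem_powerset]
  have hTS : T ∈ S := (memS T).mpr ⟨hTE.trans Finset.subset_union_left, hTst.1⟩
  obtain ⟨m, hmS, hmmin⟩ := S.exists_min_image (edgeWeight w) ⟨T, hTS⟩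
  set S2 := S.filter (fun F => edgeWeight w F ≤ edgeWeight w m) with hS2
  obtain ⟨Ts, hTsS2, hTsmin⟩ := S2.exists_min_image (fun F => (F \ A).card)
    ⟨m, Finset.mem_filter.mpr ⟨hmS, le_refl _⟩⟩
  rw [hS2, Finset.mem_filter] at hTsS2
  obtain ⟨hTsS, hTsw⟩ := hTsS2
  obtain ⟨hTsE, hTsconn⟩ := (memS Ts).mp hTsS
  have hTsmw : ∀ F ∈ S, edgeWeight w Ts ≤ edgeWeight w F :=
    fun F hF => hTsw.trans (hmmin F hF)
  -- `Ts` is acyclic, since dropping any non-bridge edge would decrease the weight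
  have hTsacy : (fromEdgeSet (Ts : Set (Sym2 V))).IsAcyclic := by
    by_contra hcyc
    rw [isAcyclic_iff_forall_adj_isBridge] at hcyc
    push_neg at hcyc
    obtain ⟨u, v, hadj, hnb⟩ := hcyc
    rw [isBridge_iff] at hnb
    have hre : (fromEdgeSet (Ts : Set (Sym2 V)) \ fromEdgeSet {s(u, v)}).Reachable u v := by
      by_contra h; exact hnb h
    obtain ⟨hmemuv, hneuv⟩ := (fromEdgeSet_adj _).mp hadj
    rw [Finset.mem_coe] at hmemuv
    have hle : fromEdgeSet (Ts : Set (Sym2 V)) \ fromEdgeSet {s(u, v)} ≤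
        fromEdgeSet ((Ts.erase s(u, v) : Finset (Sym2 V)) : Set (Sym2 V)) := by
      intro a b hab
      obtain ⟨h1, h2⟩ := hab
      obtain ⟨h3, h4⟩ := (fromEdgeSet_adj _).mp h1
      refine (fromEdgeSet_adj _).mpr ⟨?_, h4⟩
      rw [Finset.mem_coe, Finset.mem_erase]
      refine ⟨?_, h3⟩
      intro hh
      exact h2 ((fromEdgeSet_adj _).mpr ⟨by simp [hh], h4⟩)
    have hcond : ∀ a b, (fromEdgeSet (Ts : Set (Sym2 V))).Adj a b → s(a, b) ≠ s(u, v) →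
        (fromEdgeSet ((Ts.erase s(u, v) : Finset (Sym2 V)) : Set (Sym2 V))).Adj a b := by
      intro a b hab hne
      obtain ⟨h3, h4⟩ := (fromEdgeSet_adj _).mp hab
      refine (fromEdgeSet_adj _).mpr ⟨?_, h4⟩
      rw [Finset.mem_coe] at h3 ⊢
      exact Finset.mem_erase.mpr ⟨hne, h3⟩
    have hconn' : (fromEdgeSet ((Ts.erase s(u, v) : Finset (Sym2 V)) : Set (Sym2 V))).Connected := by
      have : Nonempty V := hTsconn.nonempty
      exact ⟨fun a b => transfer_reach hcond (hre.mono hle) (hTsconn.preconnected a b)⟩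
    have hmem' : Ts.erase s(u, v) ∈ S :=
      (memS _).mpr ⟨(Finset.erase_subset _ _).trans hTsE, hconn'⟩
    have hwle := hTsmw _ hmem'
    have hpos : 0 < w s(u, v) := hw _ (hTsE hmemuv)
    have hlt : edgeWeight w (Ts.erase s(u, v)) < edgeWeight w Ts := by
      unfold edgeWeight
      rw [Finset.sum_erase_eq_sub hmemuv]
      linarith
    linarith
  -- `Ts ⊆ T ∪ Eδ`
  have hsub : Ts ⊆ A := by
    by_contra hns
    obtain ⟨e, heTs, heA⟩ := Finset.not_subset.mp hns
    have heEE : e ∈ E ∪ Eδ := hTsE heTs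
    have heE : e ∈ E := by
      rcases Finset.mem_union.mp heEE with h | h
      · exact h
      · exact absurd (Finset.mem_union_right _ h) heA
    have heT : e ∉ T := fun h => heA (Finset.mem_union_left _ h)
    obtain ⟨⟨u, v⟩, rfl⟩ := Quot.exists_rep e
    have huv : Quot.mk _ (u, v) = s(u, v) := rfl
    rw [huv] at heTs heA heEE heE heT
    have hune : u ≠ v := by
      intro h
      exact hloop _ heEE (by rw [h]; exact Sym2.mk_isDiag_iff.mpr rfl)
    have hadj_e : (fromEdgeSet (Ts : Set (Sym2 V))).Adj u v :=
      (fromEdgeSet_adj _).mpr ⟨Finset.mem_coe.mpr heTs, hune⟩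
    have hbr := (isAcyclic_iff_forall_adj_isBridge.mp hTsacy) hadj_e
    rw [isBridge_iff] at hbr
    have hnr : ¬ (fromEdgeSet (Ts : Set (Sym2 V)) \ fromEdgeSet {s(u, v)}).Reachable u v := hbr
    -- find a crossing edge on the path from `u` to `v` in `T`
    obtain ⟨p0⟩ := hTst.1.preconnected u v
    have hpnd : p0.bypass.edges.Nodup := p0.bypass_isPath.edges_nodup
    obtain ⟨x, y, hxyadj, hxyp, hxynr⟩ := cross_edge p0.bypass hnr
    have hfT : s(x, y) ∈ T := by
      have := ((fromEdgeSet_adj _).mp hxyadj).1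
      rwa [Finset.mem_coe] at this
    have hxyne : x ≠ y := hxyadj.ne
    have hfe : s(x, y) ≠ s(u, v) := by
      intro h; rw [h] at hfT; exact heT hfT
    have hfTs : s(x, y) ∉ Ts := by
      intro hmem
      refine hxynr (Adj.reachable ?_)
      refine ⟨(fromEdgeSet_adj _).mpr ⟨Finset.mem_coe.mpr hmem, hxyne⟩, ?_⟩
      rw [fromEdgeSet_adj]
      simp only [Set.mem_singleton_iff, not_and]
      intro hh; exact absurd hh hfe
    -- the exchanged set `Ts' = Ts - s(u,v) + s(x,y)` is connected
    set Ts' := insert s(x, y) (Ts.erase s(u, v)) with hTs'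
    have hle2 : fromEdgeSet (Ts : Set (Sym2 V)) \ fromEdgeSet {s(u, v)} ≤
        fromEdgeSet (Ts' : Set (Sym2 V)) := by
      intro a b hab
      obtain ⟨h1, h2⟩ := hab
      obtain ⟨h3, h4⟩ := (fromEdgeSet_adj _).mp h1
      refine (fromEdgeSet_adj _).mpr ⟨?_, h4⟩
      rw [Finset.mem_coe, hTs', Finset.mem_insert]
      right
      rw [Finset.mem_erase]
      refine ⟨?_, Finset.mem_coe.mp h3⟩
      intro hh
      exact h2 ((fromEdgeSet_adj _).mpr ⟨by simp [hh], h4⟩)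
    have hadj_f : (fromEdgeSet (Ts' : Set (Sym2 V))).Adj x y :=
      (fromEdgeSet_adj _).mpr ⟨Finset.mem_coe.mpr (Finset.mem_insert_self _ _), hxyne⟩
    have hreach_uv : (fromEdgeSet (Ts' : Set (Sym2 V))).Reachable u v := by
      obtain ⟨px⟩ := hTsconn.preconnected x u
      obtain ⟨py⟩ := hTsconn.preconnected y u
      rcases reach_delete_or (v := v) px with hx | hx <;>
        rcases reach_delete_or (v := v) py with hy | hy
      · exact absurd (hx.trans hy.symm) hxynr
      · exact ((hx.mono hle2).symm.trans (hadj_f.reachable.trans (hy.mono hle2)))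
      · exact (hy.mono hle2).symm.trans (hadj_f.symm.reachable.trans (hx.mono hle2))
      · exact absurd (hx.trans hy.symm) hxynr
    have hcond2 : ∀ a b, (fromEdgeSet (Ts : Set (Sym2 V))).Adj a b → s(a, b) ≠ s(u, v) →
        (fromEdgeSet (Ts' : Set (Sym2 V))).Adj a b := by
      intro a b hab hne
      obtain ⟨h3, h4⟩ := (fromEdgeSet_adj _).mp hab
      refine (fromEdgeSet_adj _).mpr ⟨?_, h4⟩
      rw [Finset.mem_coe, hTs', Finset.mem_insert]
      exact Or.inr (Finset.mem_erase.mpr ⟨hne, Finset.mem_coe.mp h3⟩)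
    have hTs'conn : (fromEdgeSet (Ts' : Set (Sym2 V))).Connected := by
      have : Nonempty V := hTsconn.nonempty
      exact ⟨fun a b => transfer_reach hcond2 hreach_uv (hTsconn.preconnected a b)⟩
    have hTs'E : Ts' ⊆ E ∪ Eδ := by
      rw [hTs']
      intro g hg
      rcases Finset.mem_insert.mp hg with rfl | hg'
      · exact Finset.mem_union_left _ (hTE hfT)
      · exact hTsE (Finset.mem_of_mem_erase hg')
    have hTs'S : Ts' ∈ S := (memS _).mpr ⟨hTs'E, hTs'conn⟩
    have hw1 : edgeWeight w Ts ≤ edgeWeight w Ts' := hTsmw _ hTs'S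
    have hfnotin : s(x, y) ∉ Ts.erase s(u, v) := fun h => hfTs (Finset.mem_of_mem_erase h)
    have hwTs' : edgeWeight w Ts' = edgeWeight w Ts - w s(u, v) + w s(x, y) := by
      rw [hTs']
      unfold edgeWeight
      rw [Finset.sum_insert hfnotin, Finset.sum_erase_eq_sub heTs]
      ring
    -- the other exchange: `T'' = T - s(x,y) + s(u,v)` is connected, contained in `E`
    set T'' := insert s(u, v) (T.erase s(x, y)) with hT''
    have hle3 : fromEdgeSet (T : Set (Sym2 V)) \ fromEdgeSet {s(x, y)} ≤
        fromEdgeSet (T'' : Set (Sym2 V)) := by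
      intro a b hab
      obtain ⟨h1, h2⟩ := hab
      obtain ⟨h3, h4⟩ := (fromEdgeSet_adj _).mp h1
      refine (fromEdgeSet_adj _).mpr ⟨?_, h4⟩
      rw [Finset.mem_coe, hT'', Finset.mem_insert]
      right
      rw [Finset.mem_erase]
      refine ⟨?_, Finset.mem_coe.mp h3⟩
      intro hh
      exact h2 ((fromEdgeSet_adj _).mpr ⟨by simp [hh], h4⟩)
    have hadj_e'' : (fromEdgeSet (T'' : Set (Sym2 V))).Adj u v :=
      (fromEdgeSet_adj _).mpr ⟨Finset.mem_coe.mpr (Finset.mem_insert_self _ _), hune⟩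
    have hreach_xy : (fromEdgeSet (T'' : Set (Sym2 V))).Reachable x y := by
      rcases split_walk p0.bypass hpnd hxyp with ⟨h1, h2⟩ | ⟨h1, h2⟩
      · exact (h1.mono hle3).symm.trans (hadj_e''.reachable.trans (h2.mono hle3).symm)
      · exact (h2.mono hle3).trans (hadj_e''.symm.reachable.trans (h1.mono hle3))
    have hcond3 : ∀ a b, (fromEdgeSet (T : Set (Sym2 V))).Adj a b → s(a, b) ≠ s(x, y) →
        (fromEdgeSet (T'' : Set (Sym2 V))).Adj a b := by
      intro a b hab hne
      obtain ⟨h3, h4⟩ := (fromEdgeSet_adj _).mp hab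
      refine (fromEdgeSet_adj _).mpr ⟨?_, h4⟩
      rw [Finset.mem_coe, hT'', Finset.mem_insert]
      exact Or.inr (Finset.mem_erase.mpr ⟨hne, Finset.mem_coe.mp h3⟩)
    have hT''conn : (fromEdgeSet (T'' : Set (Sym2 V))).Connected := by
      have : Nonempty V := hTsconn.nonempty
      exact ⟨fun a b => transfer_reach hcond3 hreach_xy (hTst.1.preconnected a b)⟩
    have hT''E : T'' ⊆ E := by
      rw [hT'']
      intro g hg
      rcases Finset.mem_insert.mp hg with rfl | hg'
      · exact heE
      · exact hTE (Finset.mem_of_mem_erase hg')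
    obtain ⟨T3, hT3sub, hT3st⟩ := exists_spanning_subtree T'' hT''conn
    have hwT : edgeWeight w T ≤ edgeWeight w T3 := hTmin T3 (hT3sub.trans hT''E) hT3st
    have hwT3 : edgeWeight w T3 ≤ edgeWeight w T'' := by
      unfold edgeWeight
      refine Finset.sum_le_sum_of_subset_of_nonneg hT3sub ?_
      intro g hg _
      exact le_of_lt (hw g (Finset.mem_union_left _ (hT''E hg)))
    have henotin : s(u, v) ∉ T.erase s(x, y) := fun h => heT (Finset.mem_of_mem_erase h)
    have hwT'' : edgeWeight w T'' = edgeWeight w T - w s(x, y) + w s(u, v) := by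
      rw [hT'']
      unfold edgeWeight
      rw [Finset.sum_insert henotin, Finset.sum_erase_eq_sub hfT]
      ring
    -- weights are equal, so `Ts'` is also of minimum weight
    have hweq : w s(x, y) = w s(u, v) := by
      rw [hwTs'] at hw1
      rw [hwT''] at hwT3
      linarith
    have hTs'S2 : Ts' ∈ S2 := by
      rw [hS2, Finset.mem_filter]
      refine ⟨hTs'S, ?_⟩
      rw [hwTs', hweq]
      simpa using hTsw
    have hcardle := hTsmin Ts' hTs'S2
    -- but `Ts'` is strictly closer to `A`
    have hfA : s(x, y) ∈ A := Finset.mem_union_left _ hfT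
    have hdiff : Ts' \ A = (Ts \ A).erase s(u, v) := by
      ext g
      simp only [hTs', Finset.mem_sdiff, Finset.mem_erase, Finset.mem_insert]
      constructor
      · rintro ⟨rfl | ⟨hg1, hg2⟩, hg3⟩
        · exact absurd hfA hg3
        · exact ⟨hg1, hg2, hg3⟩
      · rintro ⟨hg1, hg2, hg3⟩
        exact ⟨Or.inr ⟨hg1, hg2⟩, hg3⟩
    have heDiff : s(u, v) ∈ Ts \ A := Finset.mem_sdiff.mpr ⟨heTs, heA⟩
    have : ((Ts \ A).erase s(u, v)).card < (Ts \ A).card :=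
      Finset.card_erase_lt_of_mem heDiff
    rw [hdiff] at hcardle
    omega
  -- conclusion
  refine ⟨Ts, hsub, ?_, hTsE, ⟨hTsconn, hTsacy⟩, ?_⟩
  · have hdisjT : Disjoint T Eδ := hdisj.mono_left hTE
    have hcardA : A.card = T.card + δ := by
      rw [hA, Finset.card_union_of_disjoint hdisjT, hδ]
    have hndT : ∀ e ∈ T, ¬ e.IsDiag := fun e he =>
      hloop e (Finset.mem_union_left _ (hTE he))
    have hndTs : ∀ e ∈ Ts, ¬ e.IsDiag := fun e he => hloop e (hTsE he)
    have hc1 := spanning_card hndT ⟨hTst.1, hTst.2⟩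
    have hc2 := spanning_card hndTs ⟨hTsconn, hTsacy⟩
    have := Finset.card_sdiff_of_subset hsub
    have hle := Finset.card_le_card hsub
    omega
  · intro T' hT'sub hT'st
    exact hTsmw T' ((memS T').mpr ⟨hT'sub, hT'st.1⟩)
end

section
/- Let T be a minimum spanning tree of a finite connected edge-weighted graph G = (V,E,w) with strictly positive weights, let E_δ be a set of δ new edges with strictly positive weights and E ∩ E_δ = ∅, and let G_δ = (V, E ∪ E_δ, w') where w' extends w. Define edges e_1, e_2, …, e_δ greedily: e_k is an edge of maximum weight in (T ∪ E_δ) \ {e_1,…,e_{k−1}} whose removal leaves the graph (V, (T ∪ E_δ) \ {e_1,…,e_k}) connected; set E_i := {e_1,…,e_i} and x^i := (T ∪ E_δ) \ E_i. Then for every i ∈ {1,…,δ}, the graph (V, x^i) is connected and x^i has minimum total weight among all edge sets F ⊆ E ∪ E_δ such that (V,F) is connected and the symmetric difference of F and T ∪ E_δ has size exactly i. -/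
/-! ## Spanning trees and minimum spanning trees of edge-weighted graphs

Graphs on a finite vertex type `V` are given by finite sets of (non-loop)
unordered edges `Finset (Sym2 V)`; an edge set `F` spans the graph
`SimpleGraph.fromEdgeSet ↑F` on `V`. -/

open SimpleGraph

variable {V : Type*} [Fintype V] [DecidableEq V]

section Auxiliary

set_option linter.unusedSectionVars false

private noncomputable def ncc (G : SimpleGraph V) : ℕ := Nat.card G.ConnectedComponent

private lemma gs_erase (X : Finset (Sym2 V)) (e : Sym2 V) :
    fromEdgeSet ((X.erase e : Finset (Sym2 V)) : Set (Sym2 V)) =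
      (fromEdgeSet (X : Set (Sym2 V))).deleteEdges {e} := by
  ext a b
  simp only [fromEdgeSet_adj, Finset.coe_erase, Set.mem_diff, deleteEdges_adj,
    Finset.mem_coe, Set.mem_singleton_iff, Finset.mem_erase]
  tauto

private lemma gs_mono {X Y : Finset (Sym2 V)} (h : X ⊆ Y) :
    fromEdgeSet (X : Set (Sym2 V)) ≤ fromEdgeSet (Y : Set (Sym2 V)) :=
  fromEdgeSet_mono (by exact_mod_cast h)

/-- Walk decomposition modulo a single deleted edge. -/
private lemma walk_reach_aux {G : SimpleGraph V} {u v : V} {a b : V}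
    (p : G.Walk a b) :
    (G.deleteEdges {s(u,v)}).Reachable a b ∨
      (((G.deleteEdges {s(u,v)}).Reachable a u ∨ (G.deleteEdges {s(u,v)}).Reachable a v) ∧
       ((G.deleteEdges {s(u,v)}).Reachable b u ∨ (G.deleteEdges {s(u,v)}).Reachable b v)) := by
  set H := G.deleteEdges {s(u,v)} with hH
  induction p with
  | nil => exact Or.inl (Reachable.refl _)
  | @cons a c b h q ih =>
    by_cases he : s(a,c) = s(u,v)
    · have hac : (a = u ∧ c = v) ∨ (a = v ∧ c = u) := by
        rw [Sym2.eq_iff] at he; tauto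
      have haR : H.Reachable a u ∨ H.Reachable a v := by
        rcases hac with ⟨rfl, _⟩ | ⟨rfl, _⟩
        · exact Or.inl (Reachable.refl _)
        · exact Or.inr (Reachable.refl _)
      have hcR : H.Reachable c u ∨ H.Reachable c v := by
        rcases hac with ⟨_, rfl⟩ | ⟨_, rfl⟩
        · exact Or.inr (Reachable.refl _)
        · exact Or.inl (Reachable.refl _)
      refine Or.inr ⟨haR, ?_⟩
      rcases ih with hcb | ⟨_, hb⟩
      · rcases hcR with h1 | h1
        · exact Or.inl (hcb.symm.trans h1)
        · exact Or.inr (hcb.symm.trans h1)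
      · exact hb
    · have hadj : H.Adj a c := by
        rw [hH, deleteEdges_adj]; exact ⟨h, by simpa using he⟩
      rcases ih with hcb | ⟨hc, hb⟩
      · exact Or.inl (hadj.reachable.trans hcb)
      · refine Or.inr ⟨?_, hb⟩
        rcases hc with h1 | h1
        · exact Or.inl (hadj.reachable.trans h1)
        · exact Or.inr (hadj.reachable.trans h1)

private lemma reroute {G : SimpleGraph V} {u v : V}
    (huv : (G.deleteEdges {s(u,v)}).Reachable u v) {a b : V} (hab : G.Reachable a b) :
    (G.deleteEdges {s(u,v)}).Reachable a b := by
  obtain ⟨p⟩ := hab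
  rcases walk_reach_aux (u := u) (v := v) p with h | ⟨ha, hb⟩
  · exact h
  · have h1 : (G.deleteEdges {s(u,v)}).Reachable a u := by
      rcases ha with h | h
      · exact h
      · exact h.trans huv.symm
    have h2 : (G.deleteEdges {s(u,v)}).Reachable u b := by
      rcases hb with h | h
      · exact h.symm
      · exact (h.trans huv.symm).symm
    exact h1.trans h2

private lemma walk_split {G : SimpleGraph V} {a b x y : V} (p : G.Walk a b)
    (hp : p.edges.Nodup) (hxy : s(x,y) ∈ p.edges) :
    ((G.deleteEdges {s(x,y)}).Reachable a x ∧ (G.deleteEdges {s(x,y)}).Reachable y b) ∨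
    ((G.deleteEdges {s(x,y)}).Reachable a y ∧ (G.deleteEdges {s(x,y)}).Reachable x b) := by
  induction p with
  | nil => simp at hxy
  | @cons a c b h q ih =>
    rw [SimpleGraph.Walk.edges_cons, List.nodup_cons] at hp
    rw [SimpleGraph.Walk.edges_cons, List.mem_cons] at hxy
    rcases hxy with heq | hmem
    · have hq : s(x,y) ∉ q.edges := heq ▸ hp.1
      have hqr : (G.deleteEdges {s(x,y)}).Reachable c b := ⟨q.toDeleteEdge _ hq⟩
      rcases Sym2.eq_iff.mp heq.symm with ⟨rfl, rfl⟩ | ⟨rfl, rfl⟩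
      · exact Or.inl ⟨Reachable.refl _, hqr⟩
      · exact Or.inr ⟨Reachable.refl _, hqr⟩
    · have hne : s(a,c) ≠ s(x,y) := fun h' => hp.1 (h' ▸ hmem)
      have hadj : (G.deleteEdges {s(x,y)}).Adj a c := by
        rw [deleteEdges_adj]; exact ⟨h, by simpa using hne⟩
      rcases ih hp.2 hmem with ⟨h1, h2⟩ | ⟨h1, h2⟩
      · exact Or.inl ⟨hadj.reachable.trans h1, h2⟩
      · exact Or.inr ⟨hadj.reachable.trans h1, h2⟩

private lemma walk_cross {G : SimpleGraph V} (R : V → Prop) {a b : V} (p : G.Walk a b)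
    (ha : R a) (hb : ¬ R b) :
    ∃ x y, G.Adj x y ∧ s(x,y) ∈ p.edges ∧ R x ∧ ¬ R y := by
  induction p with
  | nil => exact absurd ha hb
  | @cons a c b h q ih =>
    by_cases hc : R c
    · obtain ⟨x, y, h1, h2, h3, h4⟩ := ih hc hb
      exact ⟨x, y, h1, by simp [h2], h3, h4⟩
    · exact ⟨a, c, h, by simp, ha, hc⟩

private lemma ncc_le_of_le {G G' : SimpleGraph V} (h : G ≤ G') : ncc G' ≤ ncc G := by
  apply Nat.card_le_card_of_surjective
    (ConnectedComponent.map (Hom.ofLE h))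
  intro c
  refine c.ind (fun v => ?_)
  exact ⟨G.connectedComponentMk v, rfl⟩

private lemma ncc_connected {G : SimpleGraph V} (h : G.Connected) : ncc G = 1 := by
  have h1 : Nonempty G.ConnectedComponent := ⟨G.connectedComponentMk h.nonempty.some⟩
  have h2 : Subsingleton G.ConnectedComponent := by
    constructor
    intro c d
    refine c.ind (fun v => d.ind (fun w => ?_))
    exact ConnectedComponent.sound (h.preconnected v w)
  exact Nat.card_unique

private lemma ncc_bot : ncc (⊥ : SimpleGraph V) = Fintype.card V := by
  rw [ncc, ← Nat.card_eq_fintype_card]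
  symm
  apply Nat.card_eq_of_bijective (fun v => (⊥ : SimpleGraph V).connectedComponentMk v)
  constructor
  · intro a b h
    exact reachable_bot.mp (ConnectedComponent.exact h)
  · intro c
    exact c.ind (fun v => ⟨v, rfl⟩)

private lemma ncc_deleteEdge_le (G : SimpleGraph V) (u v : V) :
    ncc (G.deleteEdges {s(u,v)}) ≤ ncc G + 1 := by
  classical
  set H := G.deleteEdges {s(u,v)} with hH
  let f : H.ConnectedComponent → G.ConnectedComponent :=
    ConnectedComponent.map (Hom.ofLE (deleteEdges_le _))
  have hf : ∀ z : V, f (H.connectedComponentMk z) = G.connectedComponentMk z := fun z => rfl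
  have key : ∀ C C', f C = f C' → C = C' ∨
      ((C = H.connectedComponentMk u ∨ C = H.connectedComponentMk v) ∧
       (C' = H.connectedComponentMk u ∨ C' = H.connectedComponentMk v)) := by
    intro C C'
    refine C.ind (fun z => C'.ind (fun z' => ?_))
    intro hzz'
    rw [hf, hf] at hzz'
    obtain ⟨p⟩ := ConnectedComponent.exact hzz'
    rcases walk_reach_aux (u := u) (v := v) p with h | ⟨h1, h2⟩
    · exact Or.inl (ConnectedComponent.sound h)
    · refine Or.inr ⟨?_, ?_⟩
      · rcases h1 with h | h
        · exact Or.inl (ConnectedComponent.sound h)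
        · exact Or.inr (ConnectedComponent.sound h)
      · rcases h2 with h | h
        · exact Or.inl (ConnectedComponent.sound h)
        · exact Or.inr (ConnectedComponent.sound h)
  let g : H.ConnectedComponent → G.ConnectedComponent ⊕ PUnit.{1} :=
    fun C => if C = H.connectedComponentMk v then Sum.inr PUnit.unit else Sum.inl (f C)
  have hg : Function.Injective g := by
    intro C C' h
    by_cases h1 : C = H.connectedComponentMk v <;> by_cases h2 : C' = H.connectedComponentMk v
    · exact h1.trans h2.symm
    · simp only [g, if_pos h1, if_neg h2] at h; exact absurd h (by simp)
    · simp only [g, if_neg h1, if_pos h2] at h; exact absurd h (by simp)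
    · simp only [g, if_neg h1, if_neg h2, Sum.inl.injEq] at h
      rcases key C C' h with hE | ⟨hC, hC'⟩
      · exact hE
      · rcases hC with h3 | h3
        · rcases hC' with h4 | h4
          · exact h3.trans h4.symm
          · exact absurd h4 h2
        · exact absurd h3 h1
  calc ncc H ≤ Nat.card (G.ConnectedComponent ⊕ PUnit.{1}) :=
        Nat.card_le_card_of_injective g hg
    _ = ncc G + 1 := by rw [Nat.card_sum]; simp [ncc]

private lemma ncc_bridge {G : SimpleGraph V} {u v : V} (h : G.Adj u v)
    (hnr : ¬(G.deleteEdges {s(u,v)}).Reachable u v) :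
    ncc G + 1 ≤ ncc (G.deleteEdges {s(u,v)}) := by
  classical
  set H := G.deleteEdges {s(u,v)} with hH
  let f : H.ConnectedComponent → G.ConnectedComponent :=
    ConnectedComponent.map (Hom.ofLE (deleteEdges_le _))
  have hfs : Function.Surjective f := by
    intro c; exact c.ind (fun z => ⟨H.connectedComponentMk z, rfl⟩)
  have hne : H.connectedComponentMk u ≠ H.connectedComponentMk v :=
    fun hc => hnr (ConnectedComponent.exact hc)
  have hfa : f (H.connectedComponentMk u) = f (H.connectedComponentMk v) :=
    ConnectedComponent.sound h.reachable
  have hni : ¬ Function.Injective f := fun hinj => hne (hinj hfa)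
  haveI : Fintype H.ConnectedComponent := Fintype.ofFinite _
  haveI : Fintype G.ConnectedComponent := Fintype.ofFinite _
  have := Fintype.card_lt_of_surjective_not_injective f hfs hni
  rw [ncc, ncc, Nat.card_eq_fintype_card, Nat.card_eq_fintype_card]
  omega

private lemma connected_of_ncc_one {G : SimpleGraph V} [Nonempty V] (h : ncc G = 1) :
    G.Connected := by
  rw [connected_iff]
  refine ⟨fun u v => ?_, inferInstance⟩
  have h1 := Nat.card_eq_one_iff_unique.mp h
  have : Subsingleton G.ConnectedComponent := h1.1
  exact ConnectedComponent.exact (Subsingleton.elim _ _)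

private lemma ncc_erase_le (X : Finset (Sym2 V)) (e : Sym2 V) :
    ncc (fromEdgeSet ((X.erase e : Finset (Sym2 V)) : Set (Sym2 V))) ≤
      ncc (fromEdgeSet (X : Set (Sym2 V))) + 1 := by
  induction e using Sym2.ind with
  | _ u v => rw [gs_erase]; exact ncc_deleteEdge_le _ u v

private lemma ncc_sdiff_le (X B : Finset (Sym2 V)) :
    ncc (fromEdgeSet ((X \ B : Finset (Sym2 V)) : Set (Sym2 V))) ≤
      ncc (fromEdgeSet (X : Set (Sym2 V))) + B.card := by
  classical
  induction B using Finset.induction_on with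
  | empty => simp
  | @insert d B hd ih =>
    rw [Finset.sdiff_insert, Finset.card_insert_of_notMem hd]
    calc ncc (fromEdgeSet (((X \ B).erase d : Finset (Sym2 V)) : Set (Sym2 V)))
        ≤ ncc (fromEdgeSet ((X \ B : Finset (Sym2 V)) : Set (Sym2 V))) + 1 := ncc_erase_le _ _
      _ ≤ ncc (fromEdgeSet (X : Set (Sym2 V))) + B.card + 1 := by omega
      _ = _ := by omega

private lemma card_V_le (X : Finset (Sym2 V)) :
    Fintype.card V ≤ ncc (fromEdgeSet (X : Set (Sym2 V))) + X.card := by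
  classical
  induction X using Finset.induction_on with
  | empty => simp [ncc_bot]
  | @insert d X hd ih =>
    have h1 : ncc (fromEdgeSet (X : Set (Sym2 V))) ≤
        ncc (fromEdgeSet ((insert d X : Finset (Sym2 V)) : Set (Sym2 V))) + 1 := by
      have hdx : (insert d X).erase d = X := Finset.erase_insert hd
      calc ncc (fromEdgeSet (X : Set (Sym2 V)))
          = ncc (fromEdgeSet (((insert d X).erase d : Finset (Sym2 V)) : Set (Sym2 V))) := by
            rw [hdx]
        _ ≤ _ := ncc_erase_le _ _
    rw [Finset.card_insert_of_notMem hd]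
    omega

private lemma connected_card_le {X : Finset (Sym2 V)}
    (h : (fromEdgeSet (X : Set (Sym2 V))).Connected) :
    Fintype.card V ≤ X.card + 1 := by
  have := card_V_le X
  rw [ncc_connected h] at this
  omega

private lemma acyclic_of_card {X : Finset (Sym2 V)}
    (hc : (fromEdgeSet (X : Set (Sym2 V))).Connected)
    (hcard : X.card + 1 ≤ Fintype.card V) :
    (fromEdgeSet (X : Set (Sym2 V))).IsAcyclic := by
  intro v c hcyc
  cases c with
  | nil => exact hcyc.ne_nil rfl
  | @cons _ x _ h q =>
    have he : s(v,x) ∈ (SimpleGraph.Walk.cons h q).edges := by simp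
    have hr := (adj_and_reachable_delete_edges_iff_exists_cycle.mpr
      ⟨v, SimpleGraph.Walk.cons h q, hcyc, he⟩).2
    have hinX : s(v,x) ∈ X := ((fromEdgeSet_adj _).mp h).1
    have hconn' : (fromEdgeSet ((X.erase s(v,x) : Finset (Sym2 V)) : Set (Sym2 V))).Connected := by
      rw [gs_erase]
      have hne : Nonempty V := hc.nonempty
      rw [connected_iff]
      exact ⟨fun a b => reroute hr (hc.preconnected a b), hne⟩
    have := connected_card_le hconn'
    rw [Finset.card_erase_of_mem hinX] at this
    have hX1 : 1 ≤ X.card := Finset.card_pos.mpr ⟨_, hinX⟩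
    omega

private lemma ncc_erase_bridge {X : Finset (Sym2 V)} {u v : V} (hX : s(u,v) ∈ X) (huv : u ≠ v)
    (hnr : ¬ (fromEdgeSet ((X.erase s(u,v) : Finset (Sym2 V)) : Set (Sym2 V))).Reachable u v) :
    ncc (fromEdgeSet (X : Set (Sym2 V))) + 1 ≤
      ncc (fromEdgeSet ((X.erase s(u,v) : Finset (Sym2 V)) : Set (Sym2 V))) := by
  rw [gs_erase] at hnr ⊢
  exact ncc_bridge ((fromEdgeSet_adj _).mpr ⟨hX, huv⟩) hnr

private lemma not_reachable_of_not_connected {Y : Finset (Sym2 V)} {x y : V}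
    (hY : (fromEdgeSet (Y : Set (Sym2 V))).Connected)
    (hnc : ¬ (fromEdgeSet ((Y.erase s(x,y) : Finset (Sym2 V)) : Set (Sym2 V))).Connected) :
    ¬ (fromEdgeSet ((Y.erase s(x,y) : Finset (Sym2 V)) : Set (Sym2 V))).Reachable x y := by
  intro hr
  apply hnc
  rw [gs_erase] at hr ⊢
  rw [connected_iff]
  exact ⟨fun a b => reroute hr (hY.preconnected a b), hY.nonempty⟩

/-- The exchange property for the cographic structure: a smaller co-independent
set can be augmented by an element of a larger one. -/
private lemma exchange {X D D' : Finset (Sym2 V)} (hnd : ∀ e ∈ X, ¬ e.IsDiag)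
    (hD : D ⊆ X) (hD' : D' ⊆ X)
    (hcD : (fromEdgeSet ((X \ D : Finset (Sym2 V)) : Set (Sym2 V))).Connected)
    (hcD' : (fromEdgeSet ((X \ D' : Finset (Sym2 V)) : Set (Sym2 V))).Connected)
    (hcard : D.card < D'.card) :
    ∃ d ∈ D' \ D,
      (fromEdgeSet (((X \ D).erase d : Finset (Sym2 V)) : Set (Sym2 V))).Connected := by
  by_contra hno
  push_neg at hno
  have key : ∀ B : Finset (Sym2 V), B ⊆ D' \ D →
      ncc (fromEdgeSet ((X \ D : Finset (Sym2 V)) : Set (Sym2 V))) + B.card ≤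
        ncc (fromEdgeSet (((X \ D) \ B : Finset (Sym2 V)) : Set (Sym2 V))) := by
    intro B
    induction B using Finset.induction_on with
    | empty => simp
    | @insert d B hd ih =>
      intro hsub
      have hdm : d ∈ D' \ D := hsub (Finset.mem_insert_self _ _)
      have hB : B ⊆ D' \ D := fun b hb => hsub (Finset.mem_insert_of_mem hb)
      have hdd : ¬ d.IsDiag := hnd d (hD' (Finset.mem_sdiff.mp hdm).1)
      obtain ⟨x, y, rfl, hxy⟩ : ∃ x y, d = s(x,y) ∧ x ≠ y := by
        revert hdd
        induction d using Sym2.ind with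
        | _ x y => exact fun hdd => ⟨x, y, rfl, fun h => hdd (by simp [h])⟩
      have hnr₀ := not_reachable_of_not_connected hcD (hno _ hdm)
      have hsubE : ((X \ D) \ B).erase s(x,y) ⊆ (X \ D).erase s(x,y) :=
        Finset.erase_subset_erase _ Finset.sdiff_subset
      have hnr : ¬ (fromEdgeSet ((((X \ D) \ B).erase s(x,y) : Finset (Sym2 V)) :
          Set (Sym2 V))).Reachable x y :=
        fun hr => hnr₀ (hr.mono (gs_mono hsubE))
      have hmem : s(x,y) ∈ (X \ D) \ B := by
        rw [Finset.mem_sdiff, Finset.mem_sdiff]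
        exact ⟨⟨hD' (Finset.mem_sdiff.mp hdm).1, (Finset.mem_sdiff.mp hdm).2⟩, hd⟩
      have := ncc_erase_bridge hmem hxy hnr
      have hih := ih hB
      rw [Finset.sdiff_insert, Finset.card_insert_of_notMem hd]
      omega
  have h1 := key (D' \ D) (le_refl _)
  rw [ncc_connected hcD] at h1
  have h2 : (X \ D) \ (D' \ D) = (X \ D') \ (D \ D') := by
    ext a; simp only [Finset.mem_sdiff]; tauto
  have h3 := ncc_sdiff_le (X \ D') (D \ D')
  rw [ncc_connected hcD'] at h3
  rw [h2] at h1
  have h4 := Finset.card_sdiff_add_card_inter D' D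
  have h5 := Finset.card_sdiff_add_card_inter D D'
  rw [Finset.inter_comm] at h5
  omega

private lemma spanning_tree_card {T : Finset (Sym2 V)} (hnd : ∀ e ∈ T, ¬ e.IsDiag)
    (hTc : (fromEdgeSet (T : Set (Sym2 V))).Connected)
    (hTa : (fromEdgeSet (T : Set (Sym2 V))).IsAcyclic) :
    T.card + 1 = Fintype.card V := by
  classical
  haveI : Fintype (fromEdgeSet (T : Set (Sym2 V))).edgeSet := Fintype.ofFinite _
  have htree : (fromEdgeSet (T : Set (Sym2 V))).IsTree := ⟨hTc, hTa⟩
  have hE : (fromEdgeSet (T : Set (Sym2 V))).edgeFinset = T := by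
    ext e
    simp only [mem_edgeFinset, edgeSet_fromEdgeSet, Set.mem_diff, Finset.mem_coe,
      Set.mem_setOf_eq]
    exact ⟨fun h => h.1, fun h => ⟨h, hnd e h⟩⟩
  rw [← hE]
  exact htree.card_edgeFinset

private lemma swap_spanning_tree {T : Finset (Sym2 V)} {u v x y : V}
    (hnd : ∀ e ∈ T, ¬ e.IsDiag)
    (hTc : (fromEdgeSet (T : Set (Sym2 V))).Connected)
    (hTa : (fromEdgeSet (T : Set (Sym2 V))).IsAcyclic)
    (huv : u ≠ v) (haT : s(u,v) ∉ T)
    (p : (fromEdgeSet (T : Set (Sym2 V))).Walk u v) (hp : p.edges.Nodup)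
    (ht : s(x,y) ∈ p.edges) :
    (fromEdgeSet ((insert s(u,v) (T.erase s(x,y)) : Finset (Sym2 V)) : Set (Sym2 V))).Connected ∧
    (fromEdgeSet ((insert s(u,v) (T.erase s(x,y)) : Finset (Sym2 V)) :
      Set (Sym2 V))).IsAcyclic := by
  classical
  have hne : Nonempty V := hTc.nonempty
  have htE : s(x,y) ∈ (fromEdgeSet (T : Set (Sym2 V))).edgeSet := p.edges_subset_edgeSet ht
  rw [edgeSet_fromEdgeSet, Set.mem_diff] at htE
  have htT : s(x,y) ∈ T := htE.1
  have hxy : x ≠ y := fun h => htE.2 (by simp [h, Sym2.mk_isDiag_iff])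
  have hat : s(u,v) ≠ s(x,y) := fun h => haT (h ▸ htT)
  set T'' : Finset (Sym2 V) := insert s(u,v) (T.erase s(x,y)) with hT''
  have hT''eq : T'' = (insert s(u,v) T).erase s(x,y) := by
    rw [Finset.erase_insert_of_ne hat]
  have hxyT'' : (fromEdgeSet (T'' : Set (Sym2 V))).Reachable x y := by
    have hle : fromEdgeSet ((T.erase s(x,y) : Finset (Sym2 V)) : Set (Sym2 V)) ≤
        fromEdgeSet (T'' : Set (Sym2 V)) := gs_mono (Finset.subset_insert _ _)
    have hadjuv : (fromEdgeSet (T'' : Set (Sym2 V))).Adj u v :=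
      (fromEdgeSet_adj _).mpr ⟨Finset.mem_insert_self _ _, huv⟩
    have hsplit := walk_split p hp ht
    rw [← gs_erase] at hsplit
    rcases hsplit with ⟨h1, h2⟩ | ⟨h1, h2⟩
    · exact ((h1.mono hle).symm.trans hadjuv.reachable).trans (h2.mono hle).symm
    · exact ((h2.mono hle).trans hadjuv.symm.reachable).trans (h1.mono hle)
  have hconn : (fromEdgeSet (T'' : Set (Sym2 V))).Connected := by
    rw [hT''eq, gs_erase] at hxyT'' ⊢
    have hbig : (fromEdgeSet ((insert s(u,v) T : Finset (Sym2 V)) : Set (Sym2 V))).Connected :=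
      hTc.mono (gs_mono (Finset.subset_insert _ _))
    rw [connected_iff]
    exact ⟨fun a b => reroute hxyT'' (hbig.preconnected a b), hne⟩
  refine ⟨hconn, acyclic_of_card hconn ?_⟩
  have hcardT : T.card + 1 = Fintype.card V := spanning_tree_card hnd hTc hTa
  have hcard'' : T''.card = T.card := by
    rw [hT'', Finset.card_insert_of_notMem (fun h => haT (Finset.mem_of_mem_erase h)),
      Finset.card_erase_of_mem htT]
    have : 1 ≤ T.card := Finset.card_pos.mpr ⟨_, htT⟩
    omega
  omega

end Auxiliary

/-- Let `T` be a minimum spanning tree of the finite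
connected graph `G = (V,E,w)` with strictly positive weights, `E_δ` a set of
`δ` new edges (`E ∩ E_δ = ∅`, strictly positive weights), and let edges
`e_1, …, e_δ` be chosen greedily: `e_k` is an edge of maximum weight in
`(T ∪ E_δ) \ {e_1,…,e_{k−1}}` whose removal leaves
`(V, (T ∪ E_δ) \ {e_1,…,e_k})` connected. With `E_i := {e_1,…,e_i}` and
`x^i := (T ∪ E_δ) \ E_i`, for every `i ∈ {1,…,δ}` the graph `(V, x^i)` is
connected and `x^i` has minimum total weight among all `F ⊆ E ∪ E_δ` with
`(V,F)` connected and `|F ∆ (T ∪ E_δ)| = i`. -/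
theorem mst_add_edges_greedy_removal_optimal (E Eδ T : Finset (Sym2 V)) (w : Sym2 V → ℝ)
    (δ : ℕ)
    (hloop : ∀ e ∈ E ∪ Eδ, ¬ e.IsDiag)
    (hw : ∀ e ∈ E ∪ Eδ, 0 < w e)
    (hconn : (SimpleGraph.fromEdgeSet (E : Set (Sym2 V))).Connected)
    (hT : IsMST E w T)
    (hdisj : Disjoint E Eδ) (hδ : Eδ.card = δ)
    (e : Fin δ → Sym2 V)
    -- `Ei k = {e_1, …, e_k}`
    (Ei : ℕ → Finset (Sym2 V))
    (hEi : ∀ k : ℕ, Ei k = (Finset.univ.filter fun j : Fin δ => (j : ℕ) < k).image e)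
    -- `e_k` lies in `(T ∪ E_δ) \ {e_1,…,e_{k−1}}` ...
    (hmem : ∀ k : Fin δ, e k ∈ (T ∪ Eδ) \ Ei k)
    -- ... its removal leaves the graph connected ...
    (hconn' : ∀ k : Fin δ,
      (SimpleGraph.fromEdgeSet (((T ∪ Eδ) \ Ei ((k : ℕ) + 1)) : Set (Sym2 V))).Connected)
    -- ... and it has maximum weight among such edges.
    (hmax : ∀ k : Fin δ, ∀ g ∈ (T ∪ Eδ) \ Ei k,
      (SimpleGraph.fromEdgeSet ((((T ∪ Eδ) \ Ei k) \ {g}) : Set (Sym2 V))).Connected →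
        w g ≤ w (e k)) :
    ∀ i : ℕ, 1 ≤ i → i ≤ δ →
      (SimpleGraph.fromEdgeSet (((T ∪ Eδ) \ Ei i) : Set (Sym2 V))).Connected ∧
      ∀ F : Finset (Sym2 V), F ⊆ E ∪ Eδ →
        (SimpleGraph.fromEdgeSet (F : Set (Sym2 V))).Connected →
        (symmDiff F (T ∪ Eδ)).card = i →
        edgeWeight w ((T ∪ Eδ) \ Ei i) ≤ edgeWeight w F := by
  classical
  obtain ⟨hTE, ⟨hTc, hTa⟩, hTmin⟩ := hT
  set M : Finset (Sym2 V) := T ∪ Eδ with hMdef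
  have hME : M ⊆ E ∪ Eδ := Finset.union_subset_union hTE (Finset.Subset.refl _)
  have hndM : ∀ e' ∈ M, ¬ e'.IsDiag := fun e' he' => hloop e' (hME he')
  have hne : Nonempty V := hTc.nonempty
  have hTM : T ⊆ M := Finset.subset_union_left
  have hMc : (fromEdgeSet (M : Set (Sym2 V))).Connected := hTc.mono (gs_mono hTM)
  have hndT : ∀ e' ∈ T, ¬ e'.IsDiag := fun e' he' => hndM e' (hTM he')
  -- facts about the greedy sets
  have hEiM : ∀ k : ℕ, Ei k ⊆ M := by
    intro k
    rw [hEi k]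
    intro z hz
    obtain ⟨j, -, rfl⟩ := Finset.mem_image.mp hz
    exact (Finset.mem_sdiff.mp (hmem j)).1
  have einj : Function.Injective e := by
    intro k l h
    by_contra hkl
    rcases lt_or_gt_of_ne (fun hv => hkl (Fin.ext hv)) with hlt | hlt
    · apply (Finset.mem_sdiff.mp (hmem l)).2
      rw [hEi]
      exact Finset.mem_image.mpr ⟨k, Finset.mem_filter.mpr ⟨Finset.mem_univ _, hlt⟩, h⟩
    · apply (Finset.mem_sdiff.mp (hmem k)).2
      rw [hEi]
      exact Finset.mem_image.mpr ⟨l, Finset.mem_filter.mpr ⟨Finset.mem_univ _, hlt⟩, h.symm⟩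
  have hEizero : Ei 0 = ∅ := by rw [hEi]; simp
  have hEimono : ∀ {j k : ℕ}, j ≤ k → Ei j ⊆ Ei k := by
    intro j k hjk
    rw [hEi, hEi]
    exact Finset.image_subset_image
      (Finset.monotone_filter_right _ (fun l _ hl => lt_of_lt_of_le hl hjk))
  have hEisucc : ∀ (j : ℕ) (hj : j < δ), Ei (j+1) = insert (e ⟨j, hj⟩) (Ei j) := by
    intro j hj
    rw [hEi, hEi]
    ext z
    simp only [Finset.mem_image, Finset.mem_insert, Finset.mem_filter, Finset.mem_univ,
      true_and]
    constructor
    · rintro ⟨l, hl, rfl⟩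
      rcases Nat.lt_succ_iff_lt_or_eq.mp hl with hl' | hl'
      · exact Or.inr ⟨l, hl', rfl⟩
      · exact Or.inl (congrArg e (Fin.ext hl'))
    · rintro (rfl | ⟨l, hl, rfl⟩)
      · exact ⟨⟨j, hj⟩, Nat.lt_succ_self j, rfl⟩
      · exact ⟨l, Nat.lt_succ_of_lt hl, rfl⟩
  have hEicard : ∀ j : ℕ, j ≤ δ → (Ei j).card = j := by
    intro j hj
    have hbij : (Finset.univ.filter fun l : Fin δ => (l : ℕ) < j).card
        = (Finset.range j).card := by
      apply Finset.card_bij (fun (l : Fin δ) _ => (l : ℕ))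
      · intro l hl
        exact Finset.mem_range.mpr (Finset.mem_filter.mp hl).2
      · intro l₁ h₁ l₂ h₂ hval
        exact Fin.ext hval
      · intro m hm
        have hmδ : m < δ := lt_of_lt_of_le (Finset.mem_range.mp hm) hj
        exact ⟨⟨m, hmδ⟩, Finset.mem_filter.mpr ⟨Finset.mem_univ _, Finset.mem_range.mp hm⟩, rfl⟩
    rw [hEi, Finset.card_image_of_injective _ einj, hbij, Finset.card_range]
  -- recast the set-level coercions of the hypotheses into finset form
  have hconn'' : ∀ k : Fin δ, (fromEdgeSet ((M \ Ei ((k : ℕ) + 1) : Finset (Sym2 V)) :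
      Set (Sym2 V))).Connected := by
    intro k
    have h := hconn' k
    rwa [← Finset.coe_union, ← Finset.coe_sdiff] at h
  have hmax'' : ∀ k : Fin δ, ∀ g ∈ M \ Ei (k : ℕ),
      (fromEdgeSet (((M \ Ei (k : ℕ)).erase g : Finset (Sym2 V)) : Set (Sym2 V))).Connected →
        w g ≤ w (e k) := by
    intro k g hg hc
    apply hmax k g hg
    rw [← Finset.sdiff_singleton_eq_erase, Finset.coe_sdiff, Finset.coe_sdiff,
      Finset.coe_union, Finset.coe_singleton] at hc
    exact hc
  have hconnEi : ∀ j : ℕ, j ≤ δ → (fromEdgeSet ((M \ Ei j : Finset (Sym2 V)) :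
      Set (Sym2 V))).Connected := by
    intro j hj
    cases j with
    | zero => rw [hEizero, Finset.sdiff_empty]; exact hMc
    | succ k => exact hconn'' ⟨k, hj⟩
  -- positivity / monotonicity of weights
  have hwsub : ∀ {A B : Finset (Sym2 V)}, A ⊆ B → B ⊆ E ∪ Eδ →
      edgeWeight w A ≤ edgeWeight w B := by
    intro A B hAB hBE
    exact Finset.sum_le_sum_of_subset_of_nonneg hAB (fun i hi _ => (hw i (hBE hi)).le)
  have hwmono : ∀ {j k : ℕ}, j ≤ k →
      edgeWeight w (M \ Ei k) ≤ edgeWeight w (M \ Ei j) := by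
    intro j k hjk
    exact hwsub (Finset.sdiff_subset_sdiff (Finset.Subset.refl _) (hEimono hjk))
      ((Finset.sdiff_subset).trans hME)
  -- the greedy bound for pure deletions
  have greedy : ∀ j : ℕ, j ≤ δ → ∀ D : Finset (Sym2 V), D ⊆ M → D.card = j →
      (fromEdgeSet ((M \ D : Finset (Sym2 V)) : Set (Sym2 V))).Connected →
      edgeWeight w D ≤ edgeWeight w (Ei j) := by
    intro j
    induction j with
    | zero =>
      intro _ D _ hc _
      rw [Finset.card_eq_zero] at hc
      rw [hc, hEizero]
    | succ j ihj =>
      intro hj1 D hDM hDcard hDconn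
      have hjδ : j < δ := hj1
      obtain ⟨d, hd, hdc⟩ := exchange hndM (hEiM j) hDM (hconnEi j hjδ.le) hDconn
        (by rw [hEicard j hjδ.le, hDcard]; omega)
      have hdD : d ∈ D := (Finset.mem_sdiff.mp hd).1
      have hdmem : d ∈ M \ Ei j := by
        rw [Finset.mem_sdiff]
        exact ⟨hDM hdD, (Finset.mem_sdiff.mp hd).2⟩
      have hdmax : w d ≤ w (e ⟨j, hjδ⟩) := hmax'' ⟨j, hjδ⟩ d hdmem hdc
      have hcard' : (D.erase d).card = j := by
        rw [Finset.card_erase_of_mem hdD, hDcard]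
        omega
      have hconnrec : (fromEdgeSet ((M \ D.erase d : Finset (Sym2 V)) :
          Set (Sym2 V))).Connected :=
        hDconn.mono (gs_mono
          (Finset.sdiff_subset_sdiff (Finset.Subset.refl M) (Finset.erase_subset d D)))
      have hrec := ihj (Nat.le_of_succ_le hj1) (D.erase d)
        ((Finset.erase_subset _ _).trans hDM) hcard' hconnrec
      have hnotmem : e ⟨j, hjδ⟩ ∉ Ei j := (Finset.mem_sdiff.mp (hmem ⟨j, hjδ⟩)).2
      have hsum : edgeWeight w D = edgeWeight w (D.erase d) + w d := by
        rw [edgeWeight, edgeWeight, Finset.sum_erase_add _ _ hdD]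
      have hEis : edgeWeight w (Ei (j+1)) = w (e ⟨j, hjδ⟩) + edgeWeight w (Ei j) := by
        rw [hEisucc j hjδ, edgeWeight, edgeWeight, Finset.sum_insert hnotmem]
      linarith
  -- the main reduction: any connected `F` with small symmetric difference
  have main : ∀ n : ℕ, ∀ F : Finset (Sym2 V), F ⊆ E ∪ Eδ →
      (fromEdgeSet (F : Set (Sym2 V))).Connected →
      (symmDiff F M).card ≤ δ →
      (F \ M).card = n →
      edgeWeight w (M \ Ei (symmDiff F M).card) ≤ edgeWeight w F := by
    intro n
    induction n using Nat.strong_induction_on with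
    | _ n ih =>
      intro F hFE hFc hjδ hn
      have hsd : symmDiff F M = (F \ M) ∪ (M \ F) := by
        rw [symmDiff_def, Finset.sup_eq_union]
      have hdisjFM : Disjoint (F \ M) (M \ F) := by
        apply Finset.disjoint_left.mpr
        intro z hz hz'
        exact (Finset.mem_sdiff.mp hz).2 (Finset.mem_sdiff.mp hz').1
      cases n with
      | zero =>
        have hFMempty : F \ M = ∅ := Finset.card_eq_zero.mp hn
        have hFM : F ⊆ M := by
          rw [← Finset.sdiff_eq_empty_iff_subset]; exact hFMempty
        have hDeq : symmDiff F M = M \ F := by rw [hsd, hFMempty, Finset.empty_union]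
        have hMF : M \ (M \ F) = F := by
          rw [Finset.sdiff_sdiff_self_left]
          exact Finset.inter_eq_right.mpr hFM
        have hgreedy := greedy (symmDiff F M).card hjδ (M \ F) Finset.sdiff_subset
          (by rw [hDeq]) (by rw [hMF]; exact hFc)
        have h1 : edgeWeight w (M \ Ei (symmDiff F M).card) +
            edgeWeight w (Ei (symmDiff F M).card) = edgeWeight w M :=
          Finset.sum_sdiff (hEiM _)
        have h2 : edgeWeight w (M \ F) + edgeWeight w F = edgeWeight w M :=
          Finset.sum_sdiff hFM
        linarith
      | succ n =>
        have hFMne : (F \ M).Nonempty := by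
          rw [← Finset.card_pos, hn]; omega
        obtain ⟨a, ha⟩ := hFMne
        have haF : a ∈ F := (Finset.mem_sdiff.mp ha).1
        have haM : a ∉ M := (Finset.mem_sdiff.mp ha).2
        have haE : a ∈ E := by
          rcases Finset.mem_union.mp (hFE haF) with h | h
          · exact h
          · exact absurd (Finset.mem_union_right T h) haM
        have haT : a ∉ T := fun h => haM (hTM h)
        have hand : ¬ a.IsDiag := hloop a (hFE haF)
        obtain ⟨u, v, rfl, huv⟩ : ∃ u v, a = s(u,v) ∧ u ≠ v := by
          revert hand
          induction a using Sym2.ind with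
          | _ u v => exact fun hnd' => ⟨u, v, rfl, fun h => hnd' (by simp [h])⟩
        have hasymm : s(u,v) ∈ symmDiff F M := by
          rw [Finset.mem_symmDiff]; exact Or.inl ⟨haF, haM⟩
        have hj1 : 1 ≤ (symmDiff F M).card := Finset.card_pos.mpr ⟨_, hasymm⟩
        have hFerase : (F.erase s(u,v)) \ M = (F \ M).erase s(u,v) := by
          ext z; simp only [Finset.mem_sdiff, Finset.mem_erase]; tauto
        have hFeraseCard : ((F.erase s(u,v)) \ M).card = n := by
          rw [hFerase, Finset.card_erase_of_mem ha, hn]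
          omega
        have hwa : 0 < w s(u,v) := hw _ (hFE haF)
        by_cases hre :
          (fromEdgeSet ((F.erase s(u,v) : Finset (Sym2 V)) : Set (Sym2 V))).Reachable u v
        · -- just delete `a`
          have hF'c : (fromEdgeSet ((F.erase s(u,v) : Finset (Sym2 V)) :
              Set (Sym2 V))).Connected := by
            rw [gs_erase] at hre ⊢
            rw [connected_iff]
            exact ⟨fun b c => reroute hre (hFc.preconnected b c), hne⟩
          have hsymm' : symmDiff (F.erase s(u,v)) M = (symmDiff F M).erase s(u,v) := by
            ext z
            by_cases hz : z = s(u,v)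
            · subst hz
              simp [Finset.mem_symmDiff, Finset.mem_erase, haM]
            · simp only [Finset.mem_symmDiff, Finset.mem_erase, hz, not_false_eq_true,
                true_and, ne_eq]
          have hsymmcard : (symmDiff (F.erase s(u,v)) M).card = (symmDiff F M).card - 1 := by
            rw [hsymm', Finset.card_erase_of_mem hasymm]
          have hrec := ih n (Nat.lt_succ_self n) (F.erase s(u,v))
            ((Finset.erase_subset _ _).trans hFE) hF'c
            (by rw [hsymmcard]; omega) hFeraseCard
          rw [hsymmcard] at hrec
          have hmono := hwmono (Nat.sub_le (symmDiff F M).card 1)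
          have hsub : edgeWeight w (F.erase s(u,v)) + w s(u,v) = edgeWeight w F :=
            Finset.sum_erase_add _ _ haF
          linarith
        · -- swap: find a tree edge reconnecting the two sides
          have hreachall : ∀ z : V,
              (fromEdgeSet ((F.erase s(u,v) : Finset (Sym2 V)) : Set (Sym2 V))).Reachable z u ∨
              (fromEdgeSet ((F.erase s(u,v) : Finset (Sym2 V)) : Set (Sym2 V))).Reachable z v := by
            intro z
            obtain ⟨p⟩ := hFc.preconnected z u
            rw [gs_erase]
            rcases walk_reach_aux (u := u) (v := v) p with h | ⟨h1, h2⟩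
            · left; exact h
            · exact h1
          -- a path in T from u to v
          obtain ⟨p0⟩ := hTc.preconnected u v
          set p := p0.toPath.1 with hp0
          have hpnodup : p.edges.Nodup := p0.toPath.2.isTrail.edges_nodup
          -- find the crossing edge
          set R : V → Prop := fun z =>
            (fromEdgeSet ((F.erase s(u,v) : Finset (Sym2 V)) : Set (Sym2 V))).Reachable u z
            with hR
          have hRu : R u := Reachable.refl _
          have hRv : ¬ R v := hre
          obtain ⟨x, y, hadjT, hmemp, hRx, hRy⟩ := walk_cross R p hRu hRv
          have hxyT : s(x,y) ∈ T := ((fromEdgeSet_adj _).mp hadjT).1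
          have hxy : x ≠ y := ((fromEdgeSet_adj _).mp hadjT).2
          have htne : s(x,y) ≠ s(u,v) := by
            intro h
            exact haT (h ▸ hxyT)
          have htF : s(x,y) ∉ F := by
            intro hmemF
            apply hRy
            refine hRx.trans (Adj.reachable ?_)
            refine (fromEdgeSet_adj _).mpr ⟨?_, hxy⟩
            exact Finset.mem_coe.mpr (Finset.mem_erase.mpr ⟨htne, hmemF⟩)
          -- the swapped tree
          have hswap := swap_spanning_tree hndT hTc hTa huv haT p hpnodup hmemp
          have hT''E : insert s(u,v) (T.erase s(x,y)) ⊆ E :=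
            Finset.insert_subset haE ((Finset.erase_subset _ _).trans hTE)
          have hT''w := hTmin _ hT''E ⟨hswap.1, hswap.2⟩
          have haTe : s(u,v) ∉ T.erase s(x,y) := fun h => haT (Finset.mem_of_mem_erase h)
          have hsum1 : edgeWeight w (insert s(u,v) (T.erase s(x,y))) =
              w s(u,v) + edgeWeight w (T.erase s(x,y)) := Finset.sum_insert haTe
          have hsum2 : edgeWeight w (T.erase s(x,y)) + w s(x,y) = edgeWeight w T :=
            Finset.sum_erase_add _ _ hxyT
          have hwt : w s(x,y) ≤ w s(u,v) := by linarith
          -- the modified edge set F''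
          set F'' : Finset (Sym2 V) := insert s(x,y) (F.erase s(u,v)) with hF''
          have hF''E : F'' ⊆ E ∪ Eδ :=
            Finset.insert_subset (Finset.mem_union_left _ (hTE hxyT))
              ((Finset.erase_subset _ _).trans hFE)
          have hle'' : fromEdgeSet ((F.erase s(u,v) : Finset (Sym2 V)) : Set (Sym2 V)) ≤
              fromEdgeSet (F'' : Set (Sym2 V)) := gs_mono (Finset.subset_insert _ _)
          have hadj'' : (fromEdgeSet (F'' : Set (Sym2 V))).Adj x y :=
            (fromEdgeSet_adj _).mpr ⟨Finset.mem_coe.mpr (Finset.mem_insert_self _ _), hxy⟩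
          have hyv : (fromEdgeSet ((F.erase s(u,v) : Finset (Sym2 V)) :
              Set (Sym2 V))).Reachable y v := by
            rcases hreachall y with h | h
            · exact absurd h.symm hRy
            · exact h
          have huv'' : (fromEdgeSet (F'' : Set (Sym2 V))).Reachable u v :=
            ((hRx.mono hle'').trans hadj''.reachable).trans (hyv.mono hle'')
          have hF''c : (fromEdgeSet (F'' : Set (Sym2 V))).Connected := by
            rw [connected_iff]
            refine ⟨fun z1 z2 => ?_, hne⟩
            have hz : ∀ z : V, (fromEdgeSet (F'' : Set (Sym2 V))).Reachable z u := by
              intro z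
              rcases hreachall z with h | h
              · exact h.mono hle''
              · exact (h.mono hle'').trans huv''.symm
            exact (hz z1).trans (hz z2).symm
          have hsymm'' : symmDiff F'' M =
              ((symmDiff F M).erase s(u,v)).erase s(x,y) := by
            ext z
            by_cases hz1 : z = s(x,y)
            · subst hz1
              have h1 : s(x,y) ∈ F'' := Finset.mem_insert_self _ _
              have h2 : s(x,y) ∈ M := hTM hxyT
              simp [Finset.mem_symmDiff, h1, h2]
            · by_cases hz2 : z = s(u,v)
              · subst hz2
                have h1 : s(u,v) ∉ F'' := by
                  intro h
                  rcases Finset.mem_insert.mp h with h | h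
                  · exact htne h.symm
                  · exact (Finset.mem_erase.mp h).1 rfl
                simp [Finset.mem_symmDiff, h1, haM, Finset.mem_erase]
              · simp only [Finset.mem_symmDiff, hF'', Finset.mem_insert, Finset.mem_erase,
                  hz1, hz2, ne_eq, not_false_eq_true, true_and, false_or]
          have htsymm : s(x,y) ∈ (symmDiff F M).erase s(u,v) := by
            rw [Finset.mem_erase]
            refine ⟨htne, ?_⟩
            rw [Finset.mem_symmDiff]
            exact Or.inr ⟨hTM hxyT, htF⟩
          have hsymmcard'' : (symmDiff F'' M).card = (symmDiff F M).card - 2 := by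
            rw [hsymm'', Finset.card_erase_of_mem htsymm, Finset.card_erase_of_mem hasymm]
            omega
          have hj2 : 2 ≤ (symmDiff F M).card := by
            have : ({s(x,y), s(u,v)} : Finset (Sym2 V)) ⊆ symmDiff F M := by
              intro z hz
              rcases Finset.mem_insert.mp hz with rfl | hz
              · exact Finset.mem_of_mem_erase htsymm
              · rw [Finset.mem_singleton.mp hz]; exact hasymm
            have h2 := Finset.card_le_card this
            rw [Finset.card_insert_of_notMem (by simp [htne]), Finset.card_singleton] at h2
            exact h2
          have hF''M : F'' \ M = (F \ M).erase s(u,v) := by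
            ext z
            simp only [hF'', Finset.mem_sdiff, Finset.mem_insert, Finset.mem_erase, ne_eq]
            constructor
            · rintro ⟨rfl | ⟨hz1, hz2⟩, hz3⟩
              · exact absurd (hTM hxyT) hz3
              · exact ⟨hz1, hz2, hz3⟩
            · rintro ⟨hz1, hz2, hz3⟩
              exact ⟨Or.inr ⟨hz1, hz2⟩, hz3⟩
          have hF''card : (F'' \ M).card = n := by
            rw [hF''M, Finset.card_erase_of_mem ha, hn]
            omega
          have hrec := ih n (Nat.lt_succ_self n) F'' hF''E hF''c
            (by rw [hsymmcard'']; omega) hF''card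
          rw [hsymmcard''] at hrec
          have hmono := hwmono (Nat.sub_le (symmDiff F M).card 2)
          have hsumF : edgeWeight w (F.erase s(u,v)) + w s(u,v) = edgeWeight w F :=
            Finset.sum_erase_add _ _ haF
          have htFe : s(x,y) ∉ F.erase s(u,v) := fun h => htF (Finset.mem_of_mem_erase h)
          have hsumF'' : edgeWeight w F'' = w s(x,y) + edgeWeight w (F.erase s(u,v)) :=
            Finset.sum_insert htFe
          linarith
  -- assemble the final statement
  intro i hi1 hiδ
  constructor
  · have h := hconn'' ⟨i - 1, by omega⟩
    have : (i - 1) + 1 = i := by omega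
    rw [this] at h
    rw [← Finset.coe_union, ← Finset.coe_sdiff]
    exact h
  · intro F hFE hFc hcard
    have h := main (F \ M).card F hFE hFc (by rw [hcard]; exact hiδ) rfl
    rw [hcard] at h
    exact h
end

section
/- Let T be a minimum spanning tree of a finite connected edge-weighted graph G = (V,E,w) with strictly positive weights, let E_δ be a set of δ new edges with strictly positive weights and E ∩ E_δ = ∅, and let G_δ = (V, E ∪ E_δ, w') where w' extends w. Let i ∈ {1,…,δ−1} and let x^i ⊆ T ∪ E_δ with |(T ∪ E_δ) \ x^i| = i be such that (V, x^i) is connected and x^i has minimum total weight among all edge sets F ⊆ E ∪ E_δ with (V,F) connected and symmetric difference of F and T ∪ E_δ of size exactly i. Let e be an edge of maximum weight in x^i whose removal leaves (V, x^i \ {e}) connected. Then x^{i+1} := x^i \ {e} has minimum total weight among all edge sets F ⊆ E ∪ E_δ such that (V,F) is connected and the symmetric difference of F and T ∪ E_δ has size exactly i+1. -/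
/-! ## Spanning trees and minimum spanning trees of edge-weighted graphs

Graphs on a finite vertex type `V` are given by finite sets of (non-loop)
unordered edges `Finset (Sym2 V)`; an edge set `F` spans the graph
`SimpleGraph.fromEdgeSet ↑F` on `V`. -/

open SimpleGraph

variable {V : Type*} [Fintype V] [DecidableEq V]

set_option linter.unusedSectionVars false
set_option linter.unusedVariables false
set_option maxHeartbeats 1000000

private lemma coe_insert_erase {A : Finset (Sym2 V)} {e : Sym2 V} (h : e ∈ A) :
    (A : Set (Sym2 V)) = insert e ((A.erase e : Finset (Sym2 V)) : Set (Sym2 V)) := by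
  rw [← Finset.coe_insert, Finset.insert_erase h]

private lemma reach_insert {W : Set (Sym2 V)} {u v x y : V}
    (h : (fromEdgeSet (insert s(u,v) W)).Reachable x y) :
    (fromEdgeSet W).Reachable x y ∨
      ((fromEdgeSet W).Reachable x u ∧ (fromEdgeSet W).Reachable v y) ∨
      ((fromEdgeSet W).Reachable x v ∧ (fromEdgeSet W).Reachable u y) := by
  obtain ⟨p⟩ := h
  induction p with
  | nil => exact Or.inl (Reachable.refl _)
  | @cons a c d hadj p ih =>
    rw [fromEdgeSet_adj, Set.mem_insert_iff] at hadj
    obtain ⟨hm | hm, hne⟩ := hadj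
    · rw [Sym2.eq_iff] at hm
      rcases hm with ⟨rfl, rfl⟩ | ⟨rfl, rfl⟩
      · rcases ih with h1 | ⟨h1, h2⟩ | ⟨h1, h2⟩
        · exact Or.inr (Or.inl ⟨Reachable.refl _, h1⟩)
        · exact Or.inr (Or.inl ⟨Reachable.refl _, h2⟩)
        · exact Or.inl h2
      · rcases ih with h1 | ⟨h1, h2⟩ | ⟨h1, h2⟩
        · exact Or.inr (Or.inr ⟨Reachable.refl _, h1⟩)
        · exact Or.inl h2
        · exact Or.inr (Or.inr ⟨Reachable.refl _, h2⟩)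
    · have hac : (fromEdgeSet W).Reachable a c :=
        Adj.reachable ((fromEdgeSet_adj _).mpr ⟨hm, hne⟩)
      rcases ih with h1 | ⟨h1, h2⟩ | ⟨h1, h2⟩
      · exact Or.inl (hac.trans h1)
      · exact Or.inr (Or.inl ⟨hac.trans h1, h2⟩)
      · exact Or.inr (Or.inr ⟨hac.trans h1, h2⟩)

private lemma reach_patch {W : Set (Sym2 V)} {u v x y : V}
    (huv : (fromEdgeSet W).Reachable u v)
    (h : (fromEdgeSet (insert s(u,v) W)).Reachable x y) :
    (fromEdgeSet W).Reachable x y := by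
  rcases reach_insert h with h1 | ⟨h1, h2⟩ | ⟨h1, h2⟩
  · exact h1
  · exact (h1.trans huv).trans h2
  · exact (h1.trans huv.symm).trans h2

private lemma reach_insert_side {W : Set (Sym2 V)} {u v x : V}
    (h : (fromEdgeSet (insert s(u,v) W)).Reachable x u) :
    (fromEdgeSet W).Reachable x u ∨ (fromEdgeSet W).Reachable x v := by
  rcases reach_insert h with h1 | ⟨h1, _⟩ | ⟨h1, _⟩
  · exact Or.inl h1
  · exact Or.inl h1
  · exact Or.inr h1

private lemma connected_insert_of_sides {W : Set (Sym2 V)} {u v : V} (hne : u ≠ v)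
    (hs : ∀ x, (fromEdgeSet W).Reachable x u ∨ (fromEdgeSet W).Reachable x v) :
    (fromEdgeSet (insert s(u,v) W)).Connected := by
  have hle : fromEdgeSet W ≤ fromEdgeSet (insert s(u,v) W) :=
    fromEdgeSet_mono (Set.subset_insert _ _)
  have hadj : (fromEdgeSet (insert s(u,v) W)).Adj u v :=
    (fromEdgeSet_adj _).mpr ⟨Set.mem_insert _ _, hne⟩
  have key : ∀ x, (fromEdgeSet (insert s(u,v) W)).Reachable x u := by
    intro x
    rcases hs x with h | h
    · exact h.mono hle
    · exact (h.mono hle).trans hadj.symm.reachable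
  exact (connected_iff _).mpr ⟨fun x y => (key x).trans (key y).symm, ⟨u⟩⟩

private noncomputable def ncomp (A : Finset (Sym2 V)) : ℕ :=
  Nat.card (fromEdgeSet (A : Set (Sym2 V))).ConnectedComponent

private lemma ncomp_le_insert (A : Finset (Sym2 V)) (g : Sym2 V) :
    ncomp A ≤ ncomp (insert g A) + 1 := by
  classical
  induction g using Sym2.ind with
  | _ u v =>
  set G := fromEdgeSet (A : Set (Sym2 V)) with hG
  have hcoe : ((insert s(u,v) A : Finset (Sym2 V)) : Set (Sym2 V))
      = insert s(u,v) (A : Set (Sym2 V)) := Finset.coe_insert _ _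
  set G' := fromEdgeSet ((insert s(u,v) A : Finset (Sym2 V)) : Set (Sym2 V)) with hG'
  have hins : G' = fromEdgeSet (insert s(u,v) (A : Set (Sym2 V))) := by rw [hG', hcoe]
  have hle : G ≤ G' := by rw [hins, hG]; exact fromEdgeSet_mono (Set.subset_insert _ _)
  haveI : Finite G.ConnectedComponent := Quot.finite _
  haveI : Finite G'.ConnectedComponent := Quot.finite _
  let φ : G.ConnectedComponent → G'.ConnectedComponent :=
    ConnectedComponent.map (Hom.ofLE hle)
  have hφ : ∀ z : V, φ (G.connectedComponentMk z) = G'.connectedComponentMk z := fun z => rfl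
  set cu := G.connectedComponentMk u with hcu
  set cv := G.connectedComponentMk v with hcv
  have key : ∀ z z' : V, φ (G.connectedComponentMk z) = φ (G.connectedComponentMk z') →
      G.connectedComponentMk z = G.connectedComponentMk z' ∨
        (G.connectedComponentMk z = cu ∧ G.connectedComponentMk z' = cv) ∨
        (G.connectedComponentMk z = cv ∧ G.connectedComponentMk z' = cu) := by
    intro z z' hzz
    rw [hφ, hφ, ConnectedComponent.eq, hins] at hzz
    rcases reach_insert hzz with h1 | ⟨h1, h2⟩ | ⟨h1, h2⟩
    · exact Or.inl (ConnectedComponent.sound h1)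
    · exact Or.inr (Or.inl ⟨ConnectedComponent.sound h1, ConnectedComponent.sound h2.symm⟩)
    · exact Or.inr (Or.inr ⟨ConnectedComponent.sound h1, ConnectedComponent.sound h2.symm⟩)
  let ψ : G.ConnectedComponent → G'.ConnectedComponent ⊕ Unit :=
    fun c => if c = cu then Sum.inr () else Sum.inl (φ c)
  have hinj : Function.Injective ψ := by
    intro c1 c2 hc
    obtain ⟨z, rfl⟩ := Quot.exists_rep c1
    obtain ⟨z', rfl⟩ := Quot.exists_rep c2
    have e1 : (Quot.mk G.Reachable z : G.ConnectedComponent) = G.connectedComponentMk z := rfl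
    have e2 : (Quot.mk G.Reachable z' : G.ConnectedComponent) = G.connectedComponentMk z' := rfl
    rw [e1, e2] at hc ⊢
    simp only [ψ] at hc
    by_cases h1 : G.connectedComponentMk z = cu
    · by_cases h2 : G.connectedComponentMk z' = cu
      · rw [h1, h2]
      · rw [if_pos h1, if_neg h2] at hc
        exact absurd hc (by simp)
    · by_cases h2 : G.connectedComponentMk z' = cu
      · rw [if_neg h1, if_pos h2] at hc
        exact absurd hc (by simp)
      · rw [if_neg h1, if_neg h2] at hc
        have hcc := Sum.inl.inj hc
        rcases key z z' hcc with h | ⟨ha, hb⟩ | ⟨ha, hb⟩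
        · exact h
        · exact absurd ha h1
        · exact absurd hb h2
  have hcard := Nat.card_le_card_of_injective ψ hinj
  have hu1 : Nat.card Unit = 1 := Nat.card_unique
  rw [Nat.card_sum, hu1] at hcard
  show Nat.card G.ConnectedComponent ≤ Nat.card G'.ConnectedComponent + 1
  exact hcard

private lemma ncomp_erase_ge (A : Finset (Sym2 V)) (u v : V) (hm : s(u,v) ∈ A)
    (hnr : ¬ (fromEdgeSet ((A.erase s(u,v) : Finset (Sym2 V)) : Set (Sym2 V))).Reachable u v) :
    ncomp A + 1 ≤ ncomp (A.erase s(u,v)) := by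
  classical
  set W : Set (Sym2 V) := ((A.erase s(u,v) : Finset (Sym2 V)) : Set (Sym2 V)) with hW
  have hco : (A : Set (Sym2 V)) = insert s(u,v) W := coe_insert_erase hm
  set G := fromEdgeSet W with hGdef
  set G' := fromEdgeSet (A : Set (Sym2 V)) with hG'def
  have hins : G' = fromEdgeSet (insert s(u,v) W) := by rw [hG'def, hco]
  have hle : G ≤ G' := by rw [hins, hGdef]; exact fromEdgeSet_mono (Set.subset_insert _ _)
  haveI : Finite G.ConnectedComponent := Quot.finite _
  haveI : Finite G'.ConnectedComponent := Quot.finite _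
  have hune : u ≠ v := by rintro rfl; exact hnr (Reachable.refl _)
  set cu := G.connectedComponentMk u with hcu
  set cv := G.connectedComponentMk v with hcv
  have hcune : cv ≠ cu := by
    intro h
    exact hnr (ConnectedComponent.exact h).symm
  have hadjuv : G'.Reachable u v := by
    rw [hins]
    exact Adj.reachable ((fromEdgeSet_adj _).mpr ⟨Set.mem_insert _ _, hune⟩)
  let σ : G.ConnectedComponent → G.ConnectedComponent := fun c => if c = cu then cv else c
  have hσne : ∀ c, σ c ≠ cu := by
    intro c h
    by_cases hc : c = cu
    · rw [show σ c = cv from by simp [σ, hc]] at h; exact hcune h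
    · rw [show σ c = c from by simp [σ, hc]] at h; exact hc h
  have hwd : ∀ z z' : V, G'.Reachable z z' →
      σ (G.connectedComponentMk z) = σ (G.connectedComponentMk z') := by
    intro z z' h
    rw [hins] at h
    rcases reach_insert h with h1 | ⟨h1, h2⟩ | ⟨h1, h2⟩
    · rw [ConnectedComponent.sound h1]
    · have e1 : G.connectedComponentMk z = cu := ConnectedComponent.sound h1
      have e2 : G.connectedComponentMk z' = cv := ConnectedComponent.sound h2.symm
      rw [e1, e2]
      simp [σ, hcune]
    · have e1 : G.connectedComponentMk z = cv := ConnectedComponent.sound h1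
      have e2 : G.connectedComponentMk z' = cu := ConnectedComponent.sound h2.symm
      rw [e1, e2]
      simp [σ, hcune]
  let τ : G'.ConnectedComponent → G.ConnectedComponent :=
    Quot.lift (fun z => σ (G.connectedComponentMk z)) (fun z z' h => hwd z z' h)
  -- injectivity of τ
  have hτinj : Function.Injective τ := by
    intro c1 c2 hc
    obtain ⟨z, rfl⟩ := Quot.exists_rep c1
    obtain ⟨z', rfl⟩ := Quot.exists_rep c2
    have hσ : σ (G.connectedComponentMk z) = σ (G.connectedComponentMk z') := hc
    apply Quot.sound
    show G'.Reachable z z'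
    by_cases h1 : G.connectedComponentMk z = cu <;> by_cases h2 : G.connectedComponentMk z' = cu
    · exact ((ConnectedComponent.exact (h1.trans h2.symm)).mono hle)
    · -- σ z = cv, σ z' = mk z'
      rw [show σ (G.connectedComponentMk z) = cv from by simp [σ, h1],
        show σ (G.connectedComponentMk z') = G.connectedComponentMk z' from by simp [σ, h2]] at hσ
      have hzu : G.Reachable z u := ConnectedComponent.exact h1
      have hz'v : G.Reachable z' v := ConnectedComponent.exact hσ.symm
      exact ((hzu.mono hle).trans hadjuv).trans (hz'v.mono hle).symm
    · rw [show σ (G.connectedComponentMk z') = cv from by simp [σ, h2],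
        show σ (G.connectedComponentMk z) = G.connectedComponentMk z from by simp [σ, h1]] at hσ
      have hzv : G.Reachable z v := ConnectedComponent.exact hσ
      have hz'u : G.Reachable z' u := ConnectedComponent.exact h2
      exact ((hzv.mono hle).trans hadjuv.symm).trans (hz'u.mono hle).symm
    · rw [show σ (G.connectedComponentMk z) = G.connectedComponentMk z from by simp [σ, h1],
        show σ (G.connectedComponentMk z') = G.connectedComponentMk z' from by simp [σ, h2]] at hσ
      exact (ConnectedComponent.exact hσ).mono hle
  have hτne : ∀ c, τ c ≠ cu := by
    intro c
    obtain ⟨z, rfl⟩ := Quot.exists_rep c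
    exact hσne _
  let ρ : G'.ConnectedComponent ⊕ Unit → G.ConnectedComponent := Sum.elim τ (fun _ => cu)
  have hρinj : Function.Injective ρ := by
    intro s1 s2 hs
    match s1, s2 with
    | Sum.inl c1, Sum.inl c2 => rw [hτinj hs]
    | Sum.inl c1, Sum.inr _ => exact absurd hs (hτne c1)
    | Sum.inr _, Sum.inl c2 => exact absurd hs.symm (hτne c2)
    | Sum.inr _, Sum.inr _ => rfl
  have hcard := Nat.card_le_card_of_injective ρ hρinj
  have hu1 : Nat.card Unit = 1 := Nat.card_unique
  rw [Nat.card_sum, hu1] at hcard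
  show Nat.card G'.ConnectedComponent + 1 ≤ Nat.card G.ConnectedComponent
  exact hcard

private lemma ncomp_union_le (A U : Finset (Sym2 V)) : ncomp A ≤ ncomp (A ∪ U) + U.card := by
  classical
  induction U using Finset.induction_on with
  | empty => simp
  | @insert g U' hg ih =>
    rw [Finset.union_insert]
    have h1 := ncomp_le_insert (A ∪ U') g
    have h2 : (insert g U').card = U'.card + 1 := Finset.card_insert_of_notMem hg
    omega

private lemma ncomp_sdiff_ge (X : Finset (Sym2 V)) (S : Finset (Sym2 V)) (hS : S ⊆ X)
    (hbr : ∀ h ∈ S, ∀ u v : V, h = s(u,v) →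
      ¬ (fromEdgeSet ((X.erase h : Finset (Sym2 V)) : Set (Sym2 V))).Reachable u v) :
    ncomp X + S.card ≤ ncomp (X \ S) := by
  classical
  induction S using Finset.induction_on with
  | empty => simp
  | @insert g S' hg ih =>
    have hgX : g ∈ X := hS (Finset.mem_insert_self _ _)
    have hS' : S' ⊆ X := (Finset.subset_insert _ _).trans hS
    have ihh := ih hS' (fun h hh u v he => hbr h (Finset.mem_insert_of_mem hh) u v he)
    induction g using Sym2.ind with
    | _ u v =>
    have hg' : s(u,v) ∈ X \ S' := Finset.mem_sdiff.mpr ⟨hgX, hg⟩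
    have hbr' : ¬ (fromEdgeSet (((X \ S').erase s(u,v) : Finset (Sym2 V)) :
        Set (Sym2 V))).Reachable u v := by
      intro h
      refine hbr _ (Finset.mem_insert_self _ _) u v rfl (h.mono (fromEdgeSet_mono ?_))
      exact Finset.coe_subset.mpr (Finset.erase_subset_erase _ (Finset.sdiff_subset))
    have h2 := ncomp_erase_ge (X \ S') u v hg' hbr'
    rw [Finset.sdiff_insert]
    have hcard : (insert s(u,v) S').card = S'.card + 1 := Finset.card_insert_of_notMem hg
    omega

private lemma ncomp_eq_one (A : Finset (Sym2 V))
    (h : (fromEdgeSet (A : Set (Sym2 V))).Connected) : ncomp A = 1 := by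
  have h1 := h.preconnected.subsingleton_connectedComponent
  have h2 : Nonempty (fromEdgeSet (A : Set (Sym2 V))).ConnectedComponent := by
    obtain ⟨v⟩ := h.nonempty
    exact ⟨(fromEdgeSet (A : Set (Sym2 V))).connectedComponentMk v⟩
  exact Nat.card_eq_one_iff_unique.mpr ⟨h1, h2⟩

private lemma unreach_of_not_conn (A : Finset (Sym2 V)) (u v : V) (hm : s(u,v) ∈ A)
    (hA : (fromEdgeSet (A : Set (Sym2 V))).Connected)
    (hnc : ¬ (fromEdgeSet ((A.erase s(u,v) : Finset (Sym2 V)) : Set (Sym2 V))).Connected) :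
    ¬ (fromEdgeSet ((A.erase s(u,v) : Finset (Sym2 V)) : Set (Sym2 V))).Reachable u v := by
  intro hr
  apply hnc
  have hco := coe_insert_erase hm
  refine (connected_iff _).mpr ⟨fun x y => ?_, hA.nonempty⟩
  have hxy := hA.preconnected x y
  rw [hco] at hxy
  exact reach_patch hr hxy

private lemma exists_removable (X Y : Finset (Sym2 V))
    (hX : (fromEdgeSet (X : Set (Sym2 V))).Connected)
    (hY : (fromEdgeSet (Y : Set (Sym2 V))).Connected)
    (hcard : Y.card < X.card) :
    ∃ h ∈ X, h ∉ Y ∧ (fromEdgeSet ((X.erase h : Finset (Sym2 V)) : Set (Sym2 V))).Connected := by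
  classical
  by_contra hcon
  push_neg at hcon
  have hbr : ∀ h ∈ X \ Y, ∀ u v : V, h = s(u,v) →
      ¬ (fromEdgeSet ((X.erase h : Finset (Sym2 V)) : Set (Sym2 V))).Reachable u v := by
    intro h hh u v he
    subst he
    rw [Finset.mem_sdiff] at hh
    exact unreach_of_not_conn X u v hh.1 hX (hcon _ hh.1 hh.2)
  have h1 : ncomp X + (X \ Y).card ≤ ncomp (X \ (X \ Y)) :=
    ncomp_sdiff_ge X (X \ Y) Finset.sdiff_subset hbr
  rw [Finset.sdiff_sdiff_self_left] at h1
  have h2 : ncomp (X ∩ Y) ≤ ncomp ((X ∩ Y) ∪ (Y \ X)) + (Y \ X).card := ncomp_union_le _ _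
  have h3 : (X ∩ Y) ∪ (Y \ X) = Y := by
    ext z
    simp only [Finset.mem_union, Finset.mem_inter, Finset.mem_sdiff]
    tauto
  rw [h3] at h2
  rw [ncomp_eq_one X hX] at h1
  rw [ncomp_eq_one Y hY] at h2
  have e1 : (X ∩ Y).card + (X \ Y).card = X.card := Finset.card_inter_add_card_sdiff X Y
  have e2 : (Y ∩ X).card + (Y \ X).card = Y.card := Finset.card_inter_add_card_sdiff Y X
  rw [Finset.inter_comm Y X] at e2
  omega

private lemma graph_sdiff_eq (W : Set (Sym2 V)) (e : Sym2 V) :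
    fromEdgeSet W \ fromEdgeSet {e} = fromEdgeSet (W \ {e}) := by
  ext x y
  simp only [sdiff_adj, fromEdgeSet_adj, Set.mem_diff, Set.mem_singleton_iff]
  tauto

private lemma isAcyclic_mono' {G H : SimpleGraph V} (hle : H ≤ G) (hG : G.IsAcyclic) :
    H.IsAcyclic := fun _ c hc => hG (c.mapLe hle) ((Walk.mapLe_isCycle hle).mpr hc)

private lemma acyclic_insert {W : Set (Sym2 V)} {u v : V} (hne : u ≠ v)
    (hac : (fromEdgeSet W).IsAcyclic) (hnr : ¬ (fromEdgeSet W).Reachable u v) :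
    (fromEdgeSet (insert s(u,v) W)).IsAcyclic := by
  have huvW : s(u,v) ∉ W := fun hmem =>
    hnr (Adj.reachable ((fromEdgeSet_adj _).mpr ⟨hmem, hne⟩))
  rw [isAcyclic_iff_forall_edge_isBridge]
  intro e he
  induction e using Sym2.ind with
  | _ x y =>
  rw [edgeSet_fromEdgeSet, Set.mem_diff] at he
  obtain ⟨hmem, hdiag⟩ := he
  have hxy : x ≠ y := fun h => hdiag (Sym2.mk_isDiag_iff.mpr h)
  rw [isBridge_iff]
  rw [deleteEdges_fromEdgeSet]
  rcases Set.mem_insert_iff.mp hmem with heq | hW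
  · intro hreach
    have hsub : (insert s(u,v) W) \ {s(x,y)} ⊆ W := by
      intro z hz
      obtain ⟨hz1, hz2⟩ := hz
      rcases Set.mem_insert_iff.mp hz1 with hz3 | hz3
      · exact absurd (hz3.trans heq.symm) hz2
      · exact hz3
    have hWr : (fromEdgeSet W).Reachable x y := hreach.mono (fromEdgeSet_mono hsub)
    rcases Sym2.eq_iff.mp heq with ⟨rfl, rfl⟩ | ⟨rfl, rfl⟩
    · exact hnr hWr
    · exact hnr hWr.symm
  · intro hreach
    have hne' : s(x,y) ≠ s(u,v) := fun h => huvW (h ▸ hW)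
    have hset : (insert s(u,v) W) \ {s(x,y)} = insert s(u,v) (W \ {s(x,y)}) := by
      ext z
      simp only [Set.mem_diff, Set.mem_insert_iff, Set.mem_singleton_iff]
      constructor
      · rintro ⟨h1 | h1, h2⟩
        · exact Or.inl h1
        · exact Or.inr ⟨h1, h2⟩
      · rintro (rfl | ⟨h1, h2⟩)
        · exact ⟨Or.inl rfl, hne'.symm⟩
        · exact ⟨Or.inr h1, h2⟩
    rw [hset] at hreach
    have hbridge : ¬ (fromEdgeSet (W \ {s(x,y)})).Reachable x y := by
      have hb := isAcyclic_iff_forall_edge_isBridge.mp hac (e := s(x,y))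
        (by rw [edgeSet_fromEdgeSet]; exact ⟨hW, hdiag⟩)
      rw [isBridge_iff, deleteEdges_fromEdgeSet] at hb
      exact hb
    have hmono : fromEdgeSet (W \ {s(x,y)}) ≤ fromEdgeSet W :=
      fromEdgeSet_mono Set.diff_subset
    have hadjxy : (fromEdgeSet W).Reachable x y :=
      Adj.reachable ((fromEdgeSet_adj _).mpr ⟨hW, hxy⟩)
    rcases reach_insert hreach with h1 | ⟨h1, h2⟩ | ⟨h1, h2⟩
    · exact hbridge h1
    · exact hnr (((h1.mono hmono).symm.trans hadjxy).trans (h2.mono hmono).symm)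
    · exact hnr (((h2.mono hmono).trans hadjxy.symm).trans (h1.mono hmono))

private lemma walk_transfer_reach {T : Finset (Sym2 V)} {x y : V} (g : Sym2 V)
    (q : (fromEdgeSet (T : Set (Sym2 V))).Walk x y) (hg : g ∉ q.edges) :
    (fromEdgeSet ((T.erase g : Finset (Sym2 V)) : Set (Sym2 V))).Reachable x y := by
  refine ⟨q.transfer _ ?_⟩
  intro e he
  have h1 := q.edges_subset_edgeSet he
  rw [edgeSet_fromEdgeSet] at h1 ⊢
  rw [Finset.coe_erase]
  refine ⟨⟨h1.1, ?_⟩, h1.2⟩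
  intro heq
  rw [Set.mem_singleton_iff] at heq
  exact hg (heq ▸ he)

private lemma exists_cross {H : SimpleGraph V} (P : V → Prop) :
    ∀ {a b : V} (p : H.Walk a b), p.edges.Nodup → P a → ¬ P b →
    ∃ x y, s(x,y) ∈ p.edges ∧ P x ∧ ¬ P y ∧
      (∃ q : H.Walk a x, s(x,y) ∉ q.edges) ∧ (∃ r : H.Walk b y, s(x,y) ∉ r.edges) := by
  intro a b p
  induction p with
  | nil => intro _ ha hb; exact absurd ha hb
  | @cons a c d hadj q ih =>
    intro hnd ha hb
    rw [Walk.edges_cons, List.nodup_cons] at hnd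
    obtain ⟨hnotin, hq⟩ := hnd
    by_cases hc : P c
    · obtain ⟨x, y, hmem, hx, hy, ⟨q1, hq1⟩, ⟨r1, hr1⟩⟩ := ih hq hc hb
      refine ⟨x, y, ?_, hx, hy, ⟨Walk.cons hadj q1, ?_⟩, ⟨r1, hr1⟩⟩
      · rw [Walk.edges_cons]; exact List.mem_cons_of_mem _ hmem
      · rw [Walk.edges_cons]
        intro hmm
        rcases List.mem_cons.mp hmm with h | h
        · rw [h] at hmem; exact hnotin hmem
        · exact hq1 h
    · refine ⟨a, c, ?_, ha, hc, ⟨Walk.nil, by simp⟩, ⟨q.reverse, ?_⟩⟩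
      · rw [Walk.edges_cons]; exact List.mem_cons_self
      · rw [Walk.edges_reverse]
        intro hmm
        exact hnotin (List.mem_reverse.mp hmm)

private lemma edgeWeight_erase (w : Sym2 V → ℝ) (A : Finset (Sym2 V)) {e : Sym2 V} (he : e ∈ A) :
    edgeWeight w (A.erase e) = edgeWeight w A - w e := by
  unfold edgeWeight
  rw [← Finset.sum_erase_add A w he]
  ring

private lemma edgeWeight_insert (w : Sym2 V → ℝ) (A : Finset (Sym2 V)) {e : Sym2 V} (he : e ∉ A) :
    edgeWeight w (insert e A) = edgeWeight w A + w e := by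
  unfold edgeWeight
  rw [Finset.sum_insert he]
  ring

private lemma card_spanning_tree (A : Finset (Sym2 V)) (hnl : ∀ e ∈ A, ¬ e.IsDiag)
    (hA : IsSpanningTree A) : A.card = Fintype.card V - 1 := by
  classical
  have hedge : (fromEdgeSet (A : Set (Sym2 V))).edgeSet = (A : Set (Sym2 V)) := by
    rw [edgeSet_fromEdgeSet]
    ext z
    simp only [Set.mem_diff, Set.mem_setOf_eq, Finset.mem_coe]
    exact ⟨fun h => h.1, fun h => ⟨h, hnl z h⟩⟩
  haveI : Fintype (fromEdgeSet (A : Set (Sym2 V))).edgeSet := Fintype.ofFinite _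
  have htree : (fromEdgeSet (A : Set (Sym2 V))).IsTree := ⟨hA.1, hA.2⟩
  have hcard := htree.card_edgeFinset
  have hEF : (fromEdgeSet (A : Set (Sym2 V))).edgeFinset = A := by
    ext z
    rw [mem_edgeFinset, hedge]
    exact Finset.mem_coe
  rw [hEF] at hcard
  omega

private lemma exists_removable_of_card (A : Finset (Sym2 V)) (hnl : ∀ e ∈ A, ¬ e.IsDiag)
    (hA : (fromEdgeSet (A : Set (Sym2 V))).Connected)
    (hcard : Fintype.card V - 1 < A.card) :
    ∃ h ∈ A, (fromEdgeSet ((A.erase h : Finset (Sym2 V)) : Set (Sym2 V))).Connected := by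
  classical
  by_contra hcon
  push_neg at hcon
  have hac : (fromEdgeSet (A : Set (Sym2 V))).IsAcyclic := by
    rw [isAcyclic_iff_forall_edge_isBridge]
    intro e he
    induction e using Sym2.ind with
    | _ x y =>
    rw [edgeSet_fromEdgeSet, Set.mem_diff] at he
    obtain ⟨hmem, hdiag⟩ := he
    have hmem' : s(x,y) ∈ A := hmem
    rw [isBridge_iff]
    rw [deleteEdges_fromEdgeSet, ← Finset.coe_erase]
    exact unreach_of_not_conn A x y hmem' hA (hcon _ hmem')
  have := card_spanning_tree A hnl ⟨hA, hac⟩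
  omega

private lemma symmDiff_card_eq {A S : Finset (Sym2 V)} :
    (symmDiff A S).card = (A \ S).card + (S \ A).card := by
  rw [symmDiff_def, Finset.sup_eq_union,
    Finset.card_union_of_disjoint disjoint_sdiff_sdiff]

private lemma symmDiff_card_of_subset {A S : Finset (Sym2 V)} (h : A ⊆ S) :
    (symmDiff A S).card = (S \ A).card := by
  rw [symmDiff_card_eq, Finset.sdiff_eq_empty_iff_subset.mpr h]
  simp

private lemma mst_exchange (E : Finset (Sym2 V)) (w : Sym2 V → ℝ) (T : Finset (Sym2 V))
    (hloopE : ∀ e ∈ E, ¬ e.IsDiag) (hT : IsMST E w T)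
    (F : Finset (Sym2 V)) (hFconn : (fromEdgeSet (F : Set (Sym2 V))).Connected)
    (a b : V) (hab : a ≠ b) (hfF : s(a,b) ∈ F) (hfE : s(a,b) ∈ E) (hfT : s(a,b) ∉ T)
    (hnc : ¬ (fromEdgeSet ((F.erase s(a,b) : Finset (Sym2 V)) : Set (Sym2 V))).Connected) :
    ∃ g ∈ T, g ∉ F ∧ w g ≤ w s(a,b) ∧
      (fromEdgeSet ((insert g (F.erase s(a,b)) : Finset (Sym2 V)) : Set (Sym2 V))).Connected := by
  classical
  obtain ⟨hTE, hTst, hTmin⟩ := hT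
  have hTconn := hTst.1
  have hTac := hTst.2
  have hcoF : (F : Set (Sym2 V)) =
      insert s(a,b) ((F.erase s(a,b) : Finset (Sym2 V)) : Set (Sym2 V)) := coe_insert_erase hfF
  have hur : ¬ (fromEdgeSet ((F.erase s(a,b) : Finset (Sym2 V)) : Set (Sym2 V))).Reachable a b :=
    unreach_of_not_conn F a b hfF hFconn hnc
  have sides0 : ∀ z,
      (fromEdgeSet ((F.erase s(a,b) : Finset (Sym2 V)) : Set (Sym2 V))).Reachable z a ∨
      (fromEdgeSet ((F.erase s(a,b) : Finset (Sym2 V)) : Set (Sym2 V))).Reachable z b := by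
    intro z
    have hz := hFconn.preconnected z a
    rw [hcoF] at hz
    exact reach_insert_side hz
  obtain ⟨p0⟩ := hTconn.preconnected a b
  have hnd : p0.bypass.edges.Nodup := p0.bypass_isPath.edges_nodup
  obtain ⟨x, y, hmemp, hPx, hPy, ⟨q, hq⟩, ⟨r, hr⟩⟩ :=
    exists_cross (fun z =>
      (fromEdgeSet ((F.erase s(a,b) : Finset (Sym2 V)) : Set (Sym2 V))).Reachable a z)
      p0.bypass hnd (Reachable.refl a) hur
  have hgedge := p0.bypass.edges_subset_edgeSet hmemp
  rw [edgeSet_fromEdgeSet, Set.mem_diff] at hgedge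
  obtain ⟨hgT', hgdiag⟩ := hgedge
  have hgT : s(x,y) ∈ T := hgT'
  have hxy : x ≠ y := fun h => hgdiag (Sym2.mk_isDiag_iff.mpr h)
  have hgne : s(x,y) ≠ s(a,b) := fun h => hfT (h ▸ hgT)
  have hgF : s(x,y) ∉ F := by
    intro hmmF
    have hW0mem : s(x,y) ∈ F.erase s(a,b) := Finset.mem_erase.mpr ⟨hgne, hmmF⟩
    have hreach : (fromEdgeSet ((F.erase s(a,b) : Finset (Sym2 V)) :
        Set (Sym2 V))).Reachable x y :=
      Adj.reachable ((fromEdgeSet_adj _).mpr ⟨hW0mem, hxy⟩)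
    exact hPy (hPx.trans hreach)
  have hax : (fromEdgeSet ((T.erase s(x,y) : Finset (Sym2 V)) : Set (Sym2 V))).Reachable a x :=
    walk_transfer_reach _ q hq
  have hby : (fromEdgeSet ((T.erase s(x,y) : Finset (Sym2 V)) : Set (Sym2 V))).Reachable b y :=
    walk_transfer_reach _ r hr
  have hybW0 : (fromEdgeSet ((F.erase s(a,b) : Finset (Sym2 V)) : Set (Sym2 V))).Reachable y b := by
    rcases sides0 y with h | h
    · exact absurd h.symm hPy
    · exact h
  have hF2conn : (fromEdgeSet ((insert s(x,y) (F.erase s(a,b)) : Finset (Sym2 V)) :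
      Set (Sym2 V))).Connected := by
    rw [Finset.coe_insert]
    apply connected_insert_of_sides hxy
    intro z
    rcases sides0 z with h | h
    · exact Or.inl (h.trans hPx)
    · exact Or.inr (h.trans hybW0.symm)
  have hcoT : (T : Set (Sym2 V)) =
      insert s(x,y) ((T.erase s(x,y) : Finset (Sym2 V)) : Set (Sym2 V)) := coe_insert_erase hgT
  have hxynr : ¬ (fromEdgeSet ((T.erase s(x,y) : Finset (Sym2 V)) :
      Set (Sym2 V))).Reachable x y := by
    have hb2 := isAcyclic_iff_forall_edge_isBridge.mp hTac (e := s(x,y))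
      (by rw [edgeSet_fromEdgeSet]; exact ⟨hgT', hgdiag⟩)
    rw [isBridge_iff, deleteEdges_fromEdgeSet, ← Finset.coe_erase] at hb2
    exact hb2
  have sidesT : ∀ z,
      (fromEdgeSet ((T.erase s(x,y) : Finset (Sym2 V)) : Set (Sym2 V))).Reachable z a ∨
      (fromEdgeSet ((T.erase s(x,y) : Finset (Sym2 V)) : Set (Sym2 V))).Reachable z b := by
    intro z
    have hz := hTconn.preconnected z a
    rw [hcoT] at hz
    rcases reach_insert hz with h1 | ⟨h1, h2⟩ | ⟨h1, h2⟩
    · exact Or.inl h1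
    · exact Or.inl (h1.trans hax.symm)
    · exact Or.inr (h1.trans hby.symm)
  have habnr : ¬ (fromEdgeSet ((T.erase s(x,y) : Finset (Sym2 V)) :
      Set (Sym2 V))).Reachable a b := by
    intro hh
    exact hxynr ((hax.symm.trans hh).trans hby)
  have hT'conn : (fromEdgeSet (insert s(a,b) ((T.erase s(x,y) : Finset (Sym2 V)) :
      Set (Sym2 V)))).Connected := connected_insert_of_sides hab sidesT
  have hT'ac : (fromEdgeSet (insert s(a,b) ((T.erase s(x,y) : Finset (Sym2 V)) :
      Set (Sym2 V)))).IsAcyclic := by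
    apply acyclic_insert hab ?_ habnr
    apply isAcyclic_mono' ?_ hTac
    apply fromEdgeSet_mono
    rw [Finset.coe_erase]
    exact Set.diff_subset
  have hst : IsSpanningTree (insert s(a,b) (T.erase s(x,y))) := by
    constructor
    · rw [Finset.coe_insert]; exact hT'conn
    · rw [Finset.coe_insert]; exact hT'ac
  have hsubE : insert s(a,b) (T.erase s(x,y)) ⊆ E :=
    Finset.insert_subset hfE ((Finset.erase_subset _ _).trans hTE)
  have hmin := hTmin _ hsubE hst
  have habT' : s(a,b) ∉ T.erase s(x,y) := fun h => hfT (Finset.mem_of_mem_erase h)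
  rw [edgeWeight_insert w _ habT', edgeWeight_erase w T hgT] at hmin
  exact ⟨s(x,y), hgT, hgF, by linarith, hF2conn⟩

private lemma lemA (E Eδ T : Finset (Sym2 V)) (w : Sym2 V → ℝ)
    (hloop : ∀ e ∈ E ∪ Eδ, ¬ e.IsDiag) (hw : ∀ e ∈ E ∪ Eδ, 0 < w e)
    (hT : IsMST E w T) :
    ∀ (b : ℕ) (F : Finset (Sym2 V)), (F \ (T ∪ Eδ)).card = b → F ⊆ E ∪ Eδ →
      (fromEdgeSet (F : Set (Sym2 V))).Connected →
      ∃ F', F' ⊆ T ∪ Eδ ∧ (fromEdgeSet (F' : Set (Sym2 V))).Connected ∧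
        edgeWeight w F' ≤ edgeWeight w F ∧ ((T ∪ Eδ) \ F').card ≤ ((T ∪ Eδ) \ F).card := by
  classical
  intro b
  induction b with
  | zero =>
    intro F hb hsub hcn
    refine ⟨F, ?_, hcn, le_refl _, le_refl _⟩
    rwa [Finset.card_eq_zero, Finset.sdiff_eq_empty_iff_subset] at hb
  | succ n ih =>
    intro F hb hsub hcn
    have hne : (F \ (T ∪ Eδ)).Nonempty := by
      rw [← Finset.card_pos, hb]; omega
    obtain ⟨f, hf⟩ := hne
    revert hf
    induction f using Sym2.ind with
    | _ a b' =>
    intro hf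
    rw [Finset.mem_sdiff] at hf
    obtain ⟨hfF, hfS⟩ := hf
    have hfEE : s(a,b') ∈ E ∪ Eδ := hsub hfF
    have hfE : s(a,b') ∈ E := by
      rcases Finset.mem_union.mp hfEE with h | h
      · exact h
      · exact absurd (Finset.mem_union_right _ h) hfS
    have hfT : s(a,b') ∉ T := fun h => hfS (Finset.mem_union_left _ h)
    have hab : a ≠ b' := fun h => hloop _ hfEE (Sym2.mk_isDiag_iff.mpr h)
    have hfw : 0 < w s(a,b') := hw _ hfEE
    have hFes : F.erase s(a,b') ⊆ E ∪ Eδ := (Finset.erase_subset _ _).trans hsub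
    have hsd : (T ∪ Eδ) \ (F.erase s(a,b')) = (T ∪ Eδ) \ F := by
      ext z
      simp only [Finset.mem_sdiff, Finset.mem_erase]
      constructor
      · rintro ⟨h1, h2⟩
        exact ⟨h1, fun hz => h2 ⟨fun he => hfS (he ▸ h1), hz⟩⟩
      · rintro ⟨h1, h2⟩
        exact ⟨h1, fun hz => h2 hz.2⟩
    have hsd2 : (F.erase s(a,b')) \ (T ∪ Eδ) = (F \ (T ∪ Eδ)).erase s(a,b') := by
      ext z
      simp only [Finset.mem_sdiff, Finset.mem_erase]
      tauto
    have hcard' : ((F.erase s(a,b')) \ (T ∪ Eδ)).card = n := by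
      rw [hsd2, Finset.card_erase_of_mem (Finset.mem_sdiff.mpr ⟨hfF, hfS⟩), hb]
      omega
    by_cases hc : (fromEdgeSet ((F.erase s(a,b') : Finset (Sym2 V)) : Set (Sym2 V))).Connected
    · obtain ⟨F', h1, h2, h3, h4⟩ := ih (F.erase s(a,b')) hcard' hFes hc
      refine ⟨F', h1, h2, ?_, ?_⟩
      · rw [edgeWeight_erase w F hfF] at h3; linarith
      · rwa [hsd] at h4
    · obtain ⟨g, hgT, hgF, hgw, hgconn⟩ :=
        mst_exchange E w T (fun e he => hloop e (Finset.mem_union_left _ he)) hT F hcn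
          a b' hab hfF hfE hfT hc
      have hgS : g ∈ T ∪ Eδ := Finset.mem_union_left _ hgT
      have hgFe : g ∉ F.erase s(a,b') := fun h => hgF (Finset.mem_of_mem_erase h)
      have hsub2 : insert g (F.erase s(a,b')) ⊆ E ∪ Eδ :=
        Finset.insert_subset (Finset.mem_union_left _ (hT.1 hgT)) hFes
      have hcard2 : ((insert g (F.erase s(a,b'))) \ (T ∪ Eδ)).card = n := by
        have : (insert g (F.erase s(a,b'))) \ (T ∪ Eδ) = (F.erase s(a,b')) \ (T ∪ Eδ) := by
          ext z
          simp only [Finset.mem_sdiff, Finset.mem_insert]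
          constructor
          · rintro ⟨h1 | h1, h2⟩
            · exact absurd hgS (h1 ▸ h2)
            · exact ⟨h1, h2⟩
          · rintro ⟨h1, h2⟩
            exact ⟨Or.inr h1, h2⟩
        rw [this, hcard']
      obtain ⟨F', h1, h2, h3, h4⟩ := ih (insert g (F.erase s(a,b'))) hcard2 hsub2 hgconn
      refine ⟨F', h1, h2, ?_, ?_⟩
      · rw [edgeWeight_insert w _ hgFe, edgeWeight_erase w F hfF] at h3
        linarith
      · refine h4.trans ?_
        rw [← hsd]
        apply Finset.card_le_card
        exact Finset.sdiff_subset_sdiff (Finset.Subset.refl _) (Finset.subset_insert _ _)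

private lemma lemC (S : Finset (Sym2 V)) (w : Sym2 V → ℝ)
    (hnl : ∀ e ∈ S, ¬ e.IsDiag) (hwpos : ∀ e ∈ S, 0 < w e) (i : ℕ)
    (hbig : Fintype.card V - 1 + i ≤ S.card) :
    ∀ (k : ℕ) (F : Finset (Sym2 V)), F ⊆ S →
      (fromEdgeSet (F : Set (Sym2 V))).Connected → (S \ F).card + k = i →
      ∃ F', F' ⊆ S ∧ (fromEdgeSet (F' : Set (Sym2 V))).Connected ∧
        (S \ F').card = i ∧ edgeWeight w F' ≤ edgeWeight w F := by
  classical
  intro k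
  induction k with
  | zero =>
    intro F h1 h2 h3
    exact ⟨F, h1, h2, by omega, le_refl _⟩
  | succ m ih =>
    intro F h1 h2 h3
    have hFcard : Fintype.card V - 1 < F.card := by
      have := Finset.card_sdiff_add_card_eq_card h1
      omega
    obtain ⟨h, hhF, hconn2⟩ :=
      exists_removable_of_card F (fun e he => hnl e (h1 he)) h2 hFcard
    have hhS : h ∈ S := h1 hhF
    have hsd : S \ (F.erase h) = insert h (S \ F) := by
      ext z
      simp only [Finset.mem_sdiff, Finset.mem_erase, Finset.mem_insert]
      constructor
      · rintro ⟨h4, h5⟩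
        by_cases hz : z = h
        · exact Or.inl hz
        · exact Or.inr ⟨h4, fun hzF => h5 ⟨hz, hzF⟩⟩
      · rintro (rfl | ⟨h4, h5⟩)
        · exact ⟨hhS, fun hc => hc.1 rfl⟩
        · exact ⟨h4, fun hc => h5 hc.2⟩
    have hcard2 : (S \ F.erase h).card + m = i := by
      rw [hsd, Finset.card_insert_of_notMem (fun hc => (Finset.mem_sdiff.mp hc).2 hhF)]
      omega
    obtain ⟨F', a1, a2, a3, a4⟩ := ih (F.erase h) ((Finset.erase_subset _ _).trans h1) hconn2 hcard2
    refine ⟨F', a1, a2, a3, a4.trans ?_⟩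
    rw [edgeWeight_erase w F hhF]
    have := hwpos h hhS
    linarith

/-- Let `T` be a minimum spanning tree of the finite
connected graph `G = (V,E,w)` with strictly positive weights, `E_δ` a set of
`δ` new edges (`E ∩ E_δ = ∅`, strictly positive weights). Let
`i ∈ {1,…,δ−1}` and let `x^i ⊆ T ∪ E_δ` with `|(T ∪ E_δ) \ x^i| = i` be
connected and of minimum total weight among all `F ⊆ E ∪ E_δ` with `(V,F)`
connected and `|F ∆ (T ∪ E_δ)| = i`. Let `e` be an edge of maximum weight in
`x^i` whose removal leaves `(V, x^i \ {e})` connected. Then `x^{i+1} := x^i \ {e}`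
has minimum total weight among all `F ⊆ E ∪ E_δ` with `(V,F)` connected and
`|F ∆ (T ∪ E_δ)| = i + 1`. -/
theorem mst_add_edges_greedy_step (E Eδ T : Finset (Sym2 V)) (w : Sym2 V → ℝ) (δ : ℕ)
    (hloop : ∀ e ∈ E ∪ Eδ, ¬ e.IsDiag)
    (hw : ∀ e ∈ E ∪ Eδ, 0 < w e)
    (hconn : (SimpleGraph.fromEdgeSet (E : Set (Sym2 V))).Connected)
    (hT : IsMST E w T)
    (hdisj : Disjoint E Eδ) (hδ : Eδ.card = δ)
    (i : ℕ) (hi1 : 1 ≤ i) (hiδ : i ≤ δ - 1) (hδ1 : 1 ≤ δ)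
    (xi : Finset (Sym2 V)) (hxi : xi ⊆ T ∪ Eδ) (hxicard : ((T ∪ Eδ) \ xi).card = i)
    (hxiconn : (SimpleGraph.fromEdgeSet (xi : Set (Sym2 V))).Connected)
    (hximin : ∀ F : Finset (Sym2 V), F ⊆ E ∪ Eδ →
      (SimpleGraph.fromEdgeSet (F : Set (Sym2 V))).Connected →
      (symmDiff F (T ∪ Eδ)).card = i → edgeWeight w xi ≤ edgeWeight w F)
    (e : Sym2 V) (he : e ∈ xi)
    (heconn : (SimpleGraph.fromEdgeSet ((xi \ {e}) : Set (Sym2 V))).Connected)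
    (hemax : ∀ g ∈ xi,
      (SimpleGraph.fromEdgeSet ((xi \ {g}) : Set (Sym2 V))).Connected → w g ≤ w e) :
    ∀ F : Finset (Sym2 V), F ⊆ E ∪ Eδ →
      (SimpleGraph.fromEdgeSet (F : Set (Sym2 V))).Connected →
      (symmDiff F (T ∪ Eδ)).card = i + 1 →
      edgeWeight w (xi \ {e}) ≤ edgeWeight w F := by
  intro F hFsub hFconn hFcard
  classical
  have hTE : T ⊆ E := hT.1
  have hSsub : T ∪ Eδ ⊆ E ∪ Eδ := Finset.union_subset_union hTE (Finset.Subset.refl _)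
  have hSnl : ∀ g ∈ T ∪ Eδ, ¬ g.IsDiag := fun g hg => hloop g (hSsub hg)
  have hSw : ∀ g ∈ T ∪ Eδ, 0 < w g := fun g hg => hw g (hSsub hg)
  have hTcard : T.card = Fintype.card V - 1 :=
    card_spanning_tree T (fun g hg => hloop g (Finset.mem_union_left _ (hTE hg))) hT.2.1
  have hTEδdisj : Disjoint T Eδ := hdisj.mono_left hTE
  have hScard : (T ∪ Eδ).card = (Fintype.card V - 1) + δ := by
    rw [Finset.card_union_of_disjoint hTEδdisj, hTcard, hδ]
  have hsymm : (F \ (T ∪ Eδ)).card + ((T ∪ Eδ) \ F).card = i + 1 := by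
    rw [← hFcard, symmDiff_card_eq]
  obtain ⟨F', hF'S, hF'conn, hF'w, hF'miss⟩ :=
    lemA E Eδ T w hloop hw hT (F \ (T ∪ Eδ)).card F rfl hFsub hFconn
  have ha' : ((T ∪ Eδ) \ F').card ≤ i + 1 := by omega
  have hewpos : 0 < w e := hSw e (hxi he)
  have hgoal : edgeWeight w (xi \ {e}) = edgeWeight w xi - w e := by
    rw [Finset.sdiff_singleton_eq_erase, edgeWeight_erase w xi he]
  rw [hgoal]
  by_cases hcase : ((T ∪ Eδ) \ F').card ≤ i
  · have hbig : Fintype.card V - 1 + i ≤ (T ∪ Eδ).card := by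
      rw [hScard]; omega
    obtain ⟨F'', b1, b2, b3, b4⟩ :=
      lemC (T ∪ Eδ) w hSnl hSw i hbig (i - ((T ∪ Eδ) \ F').card) F' hF'S hF'conn (by omega)
    have hxile : edgeWeight w xi ≤ edgeWeight w F'' := by
      apply hximin F'' (b1.trans hSsub) b2
      rw [symmDiff_card_of_subset b1, b3]
    linarith
  · have hEq : ((T ∪ Eδ) \ F').card = i + 1 := by omega
    have hxiScard : xi.card + i = (T ∪ Eδ).card := by
      have := Finset.card_sdiff_add_card_eq_card hxi
      omega
    have hF'card : F'.card + (i+1) = (T ∪ Eδ).card := by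
      have := Finset.card_sdiff_add_card_eq_card hF'S
      omega
    have hlt : F'.card < xi.card := by omega
    obtain ⟨h, hhxi, hhF', hhconn⟩ := exists_removable xi F' hxiconn hF'conn hlt
    have hwh : w h ≤ w e := by
      apply hemax h hhxi
      rw [← Finset.coe_erase]
      exact hhconn
    have hhS : h ∈ T ∪ Eδ := hxi hhxi
    have hF2sub : insert h F' ⊆ T ∪ Eδ := Finset.insert_subset hhS hF'S
    have hF2conn : (fromEdgeSet ((insert h F' : Finset (Sym2 V)) : Set (Sym2 V))).Connected := by
      refine Connected.mono (fromEdgeSet_mono ?_) hF'conn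
      rw [Finset.coe_insert]
      exact Set.subset_insert _ _
    have hF2miss : ((T ∪ Eδ) \ insert h F').card = i := by
      have hset : (T ∪ Eδ) \ insert h F' = ((T ∪ Eδ) \ F').erase h := Finset.sdiff_insert _ _ _
      rw [hset, Finset.card_erase_of_mem (Finset.mem_sdiff.mpr ⟨hhS, hhF'⟩), hEq]
      omega
    have hxile : edgeWeight w xi ≤ edgeWeight w (insert h F') := by
      apply hximin _ (hF2sub.trans hSsub) hF2conn
      rw [symmDiff_card_of_subset hF2sub, hF2miss]
    have hWF2 : edgeWeight w (insert h F') = edgeWeight w F' + w h :=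
      edgeWeight_insert w F' hhF'
    linarith
end

section
/- Let n ≥ 1, let 1 ≤ B ≤ n, let w_i = 2^{n−i} for i ∈ {1,…,n}, let C = n·2^{n−1} + 1, and define f : {0,1}^n → ℝ by f(x) = Σ_{i=1}^n 2^{n−i} x_i − C·max{Σ_{i=1}^n x_i − B, 0}. Then the unique maximizer of f over {0,1}^n is the string x* with x*_i = 1 for i ≤ B and x*_i = 0 for i > B; i.e., f(x) < f(x*) for every x ∈ {0,1}^n with x ≠ x*. -/
open Finset in
private lemma bv_sum_two_pow (m : ℕ) : ∑ t ∈ range m, 2^t = 2^m - 1 := by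
  induction m with
  | zero => simp
  | succ k ih =>
    rw [Finset.sum_range_succ, ih, pow_succ]
    have : 1 ≤ 2^k := Nat.one_le_two_pow
    omega

open Finset in
private lemma bv_tail_bound {n : ℕ} (j : Fin n) :
    ∑ i ∈ Ioi j, 2 ^ (n - 1 - (i : ℕ)) ≤ 2 ^ (n - 1 - (j : ℕ)) - 1 := by
  have h1 : ∑ i ∈ Ioi j, 2 ^ (n - 1 - (i : ℕ))
      = ∑ k ∈ (Ioi j).image (fun i : Fin n => n - 1 - (i : ℕ)), 2 ^ k := by
    rw [Finset.sum_image]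
    intro a ha b hb hab
    have ha' := a.isLt; have hb' := b.isLt
    exact Fin.ext (by beta_reduce at hab; omega)
  rw [h1, ← bv_sum_two_pow]
  apply Finset.sum_le_sum_of_subset
  intro k hk
  simp only [Finset.mem_image, Finset.mem_Ioi] at hk
  obtain ⟨i, hij, rfl⟩ := hk
  have := i.isLt
  have : (j : ℕ) < (i : ℕ) := hij
  simp only [Finset.mem_range]
  omega

open Finset in
private lemma bv_split_sum {n : ℕ} (j : Fin n) (f : Fin n → ℕ) :
    ∑ i, f i = ∑ i ∈ Iio j, f i + f j + ∑ i ∈ Ioi j, f i := by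
  rw [← Finset.sum_add_sum_compl (Iio j)]
  have hc : ∑ i ∈ (Iio j)ᶜ, f i = ∑ i ∈ Ici j, f i := by
    apply Finset.sum_congr _ (fun _ _ => rfl)
    ext i; simp
  rw [hc, ← Finset.Ioi_insert, Finset.sum_insert (by simp), add_assoc]

private def bvN (n : ℕ) (x : Fin n → Bool) : ℕ :=
  ∑ i : Fin n, if x i then 2 ^ (n - 1 - (i : ℕ)) else 0

open Finset in
private lemma bvN_lt {n : ℕ} {x y : Fin n → Bool} {j : Fin n}
    (hxj : x j = false) (hyj : y j = true)
    (hlt : ∀ i : Fin n, i < j → x i = y i) :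
    bvN n x < bvN n y := by
  unfold bvN
  rw [bv_split_sum j, bv_split_sum j (f := fun i => if y i then 2 ^ (n - 1 - (i : ℕ)) else 0)]
  simp only [hxj, hyj, Bool.false_eq_true, if_true, if_false]
  have hA : ∑ i ∈ Iio j, (if x i then 2 ^ (n - 1 - (i : ℕ)) else 0)
      = ∑ i ∈ Iio j, (if y i then 2 ^ (n - 1 - (i : ℕ)) else 0) := by
    apply Finset.sum_congr rfl
    intro i hi
    rw [hlt i (Finset.mem_Iio.mp hi)]
  rw [hA]
  have hT : ∑ i ∈ Ioi j, (if x i then 2 ^ (n - 1 - (i : ℕ)) else 0)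
      ≤ 2 ^ (n - 1 - (j : ℕ)) - 1 := by
    refine le_trans (Finset.sum_le_sum fun i _ => ?_) (bv_tail_bound j)
    split <;> simp
  have hpos : 1 ≤ 2 ^ (n - 1 - (j : ℕ)) := Nat.one_le_two_pow
  omega

private lemma cast_bvN (n : ℕ) (x : Fin n → Bool) :
    ((bvN n x : ℕ) : ℝ) = ∑ i : Fin n, if x i then (2 : ℝ) ^ (n - 1 - (i : ℕ)) else 0 := by
  unfold bvN
  push_cast
  rfl

open Finset in
private lemma card_lt_B (n B : ℕ) (hBn : B ≤ n) :
    (∑ i : Fin n, if (i : ℕ) < B then 1 else 0 : ℕ) = B := by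
  rw [Fin.sum_univ_eq_sum_range (fun i => if i < B then 1 else 0)]
  have h : ∀ i, (if i < B then (1:ℕ) else 0) = (if i ∈ range B then 1 else 0) := by
    intro i; simp
  simp only [h]
  rw [Finset.sum_ite_mem]
  have : range n ∩ range B = range B := by
    rw [Finset.inter_eq_right]
    exact Finset.range_subset_range.mpr hBn
  simp [this]

open Finset in
private lemma bvN_le (n : ℕ) (x : Fin n → Bool) : bvN n x ≤ n * 2 ^ (n - 1) := by
  calc bvN n x ≤ ∑ _i : Fin n, 2 ^ (n - 1) := by
        apply Finset.sum_le_sum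
        intro i _
        split
        · exact Nat.pow_le_pow_right (by norm_num) (by omega)
        · exact Nat.zero_le _
    _ = n * 2 ^ (n - 1) := by simp [Finset.sum_const, Finset.card_univ, mul_comm]

/-- The penalized BinVal fitness
`f(x) = Σ_{i=1}^n 2^{n−i} x_i − C·max{Σ_{i=1}^n x_i − B, 0}` with
`C = n·2^{n−1} + 1` (0-based indexing: the weight of position `i : Fin n` is
`2^{n−1−i}`). -/
noncomputable def binValFitness (n B : ℕ) (x : Fin n → Bool) : ℝ :=
  (∑ i : Fin n, if x i then (2 : ℝ) ^ (n - 1 - (i : ℕ)) else 0) -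
    ((n : ℝ) * 2 ^ (n - 1) + 1) *
      max (((∑ i : Fin n, if x i then 1 else 0 : ℕ) : ℝ) - (B : ℝ)) 0

/-- Let `n ≥ 1`, `1 ≤ B ≤ n`, and let `f` be the penalized
BinVal fitness with budget `B`. Then the unique maximizer of `f` over
`{0,1}ⁿ` is the string `x*` with `x*_i = 1` for `i ≤ B` and `x*_i = 0` for
`i > B` (0-based: `x* i = 1` iff `i < B`): `f(x) < f(x*)` for every `x ≠ x*`. -/
theorem binVal_unique_optimum (n B : ℕ) (hn : 1 ≤ n) (hB1 : 1 ≤ B) (hBn : B ≤ n) :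
    ∀ x : Fin n → Bool, x ≠ (fun i : Fin n => decide ((i : ℕ) < B)) →
      binValFitness n B x < binValFitness n B (fun i : Fin n => decide ((i : ℕ) < B)) := by
  intro x hx
  set xs : Fin n → Bool := fun i : Fin n => decide ((i : ℕ) < B) with hxs
  have hcard_xs : (∑ i : Fin n, if xs i then 1 else 0 : ℕ) = B := by
    simpa [hxs] using card_lt_B n B hBn
  have hf_xs : binValFitness n B xs = (bvN n xs : ℝ) := by
    unfold binValFitness
    rw [hcard_xs, cast_bvN]
    simp
  set k : ℕ := ∑ i : Fin n, if x i then 1 else 0 with hk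
  by_cases hkB : k ≤ B
  · -- feasible case
    have hf_x : binValFitness n B x = (bvN n x : ℝ) := by
      unfold binValFitness
      rw [← hk, cast_bvN]
      have : max ((k : ℝ) - B) 0 = 0 := max_eq_right (by
        have : (k : ℝ) ≤ B := by exact_mod_cast hkB
        linarith)
      rw [this]; ring
    rw [hf_x, hf_xs]
    have hlt : bvN n x < bvN n xs := by
      have hne : (Finset.univ.filter (fun i : Fin n => x i ≠ xs i)).Nonempty := by
        rcases Function.ne_iff.mp hx with ⟨j, hj⟩
        exact ⟨j, by simp [hj]⟩
      set j := (Finset.univ.filter (fun i : Fin n => x i ≠ xs i)).min' hne with hjdef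
      have hjmem : x j ≠ xs j := by
        have := Finset.min'_mem _ hne
        simpa using this
      have hjmin : ∀ i : Fin n, i < j → x i = xs i := by
        intro i hij
        by_contra hne'
        have : j ≤ i := Finset.min'_le _ _ (by simp [hne'])
        exact absurd hij (not_lt.mpr this)
      cases hxj : x j with
      | false =>
        have hysj : xs j = true := by
          cases h : xs j
          · exact absurd (hxj.trans h.symm) hjmem
          · rfl
        exact bvN_lt hxj hysj hjmin
      | true =>
        exfalso
        have hxsj : xs j = false := by
          cases h : xs j
          · rfl
          · exact absurd (hxj.trans h.symm) hjmem
        have hBj : B ≤ (j : ℕ) := by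
          by_contra h
          simp [hxs, not_le.mp h] at hxsj
        -- count ones: all i with i < B are ones, plus j
        have hsub : insert j (Finset.univ.filter (fun i : Fin n => (i : ℕ) < B))
            ⊆ Finset.univ.filter (fun i : Fin n => x i = true) := by
          intro i hi
          rcases Finset.mem_insert.mp hi with rfl | hi
          · simp [hxj]
          · simp only [Finset.mem_filter, Finset.mem_univ, true_and] at hi ⊢
            have hij : i < j := by
              have := hi
              exact Fin.lt_def.mpr (by omega)
            rw [hjmin i hij, hxs]
            simpa using hi
        have hcard1 : (Finset.univ.filter (fun i : Fin n => (i : ℕ) < B)).card = B := by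
          rw [Finset.card_filter]
          exact card_lt_B n B hBn
        have hcard2 : (Finset.univ.filter (fun i : Fin n => x i = true)).card = k := by
          rw [Finset.card_filter, hk]
        have hjnot : j ∉ Finset.univ.filter (fun i : Fin n => (i : ℕ) < B) := by
          simp [not_lt.mpr hBj]
        have := Finset.card_le_card hsub
        rw [Finset.card_insert_of_notMem hjnot, hcard1, hcard2] at this
        omega
    exact_mod_cast hlt
  · -- infeasible case
    push_neg at hkB
    have hfx_le : binValFitness n B x ≤ -1 := by
      unfold binValFitness
      rw [← hk]
      have h1 : (∑ i : Fin n, if x i then (2 : ℝ) ^ (n - 1 - (i : ℕ)) else 0)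
          ≤ (n : ℝ) * 2 ^ (n - 1) := by
        rw [← cast_bvN]
        have := bvN_le n x
        calc ((bvN n x : ℕ) : ℝ) ≤ ((n * 2 ^ (n - 1) : ℕ) : ℝ) := by exact_mod_cast this
          _ = (n : ℝ) * 2 ^ (n - 1) := by push_cast; ring
      have h2 : (1 : ℝ) ≤ max ((k : ℝ) - B) 0 := by
        have : (B : ℝ) + 1 ≤ (k : ℝ) := by exact_mod_cast hkB
        rw [max_eq_left (by linarith)]
        linarith
      have hC : (0 : ℝ) < (n : ℝ) * 2 ^ (n - 1) + 1 := by positivity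
      nlinarith [mul_le_mul_of_nonneg_left h2 hC.le]
    have hfxs_nonneg : (0 : ℝ) ≤ binValFitness n B xs := by
      rw [hf_xs]; positivity
    linarith
end
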